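/- arXiv:1107.0184 — 7 statements merged into one kernel-verified Lean document; each statement's English description precedes it below -/
import Mathlib

section
/- Let n ≥ 1, ρ : ℝⁿ → (0,∞) be any function, N > 0, and let k_u(x,y) (u > 0, x, y ∈ ℝⁿ) be a nonnegative measurable family satisfying 0 ≤ k_u(x,y) ≤ C₀ u^{−n/2} e^{−|x−y|²/(5u)} (1 + √u/ρ(x) + √u/ρ(y))^{−N} for all u, x, y. Define the subordinated Poisson kernel P_t(x,y) = (t/(2√π)) ∫_0^∞ e^{−t²/(4u)} u^{−3/2} k_u(x,y) du. Then there exists a constant C (depending only on n, N, C₀) such that P_t(x,y) ≤ C t (|x−y|² + t²)^{−(n+1)/2} (1 + (|x−y|² + t²)^{1/2}/ρ(x) + (|x−y|² + t²)^{1/2}/ρ(y))^{−N} for all x, y ∈ ℝⁿ and t > 0. -/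
open MeasureTheory Metric Set

/-- Substitution lemma: integrability of the inverse-Gamma type integrand. -/
lemma invGamma_integrableOn {a s : ℝ} (ha : 0 < a) (hs : 0 < s) :
    IntegrableOn (fun u : ℝ => Real.exp (-(a / u)) * u ^ (-s - 1)) (Ioi (0 : ℝ)) := by
  have hg : IntegrableOn (fun y : ℝ => y ^ (s - 1) * Real.exp (-(a * y))) (Ioi (0 : ℝ)) := by
    have h := integrableOn_rpow_mul_exp_neg_mul_rpow (s := s - 1) (p := 1)
      (by linarith) one_pos ha
    refine h.congr_fun (fun x hx => ?_) measurableSet_Ioi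
    simp only [Real.rpow_one]
    ring_nf
  have h2 := (integrableOn_Ioi_comp_rpow_iff
      (fun y : ℝ => y ^ (s - 1) * Real.exp (-(a * y))) (p := -1) (by norm_num)).mpr hg
  refine h2.congr_fun (fun x hx => ?_) measurableSet_Ioi
  have hx0 : (0 : ℝ) < x := hx
  simp only [smul_eq_mul]
  rw [show ((-1 : ℝ) - 1) = (-2 : ℝ) by norm_num, Real.rpow_neg_one,
    abs_neg, abs_one, one_mul]
  rw [Real.inv_rpow hx0.le, ← Real.rpow_neg hx0.le]
  rw [show a * x⁻¹ = a / x by ring]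
  rw [show x ^ (-2 : ℝ) * (x ^ (-(s - 1)) * Real.exp (-(a / x)))
      = Real.exp (-(a / x)) * (x ^ (-(s - 1)) * x ^ (-2 : ℝ)) from by ring,
    ← Real.rpow_add hx0, show -(s - 1) + (-2 : ℝ) = -s - 1 from by ring]

/-- Substitution lemma: value of the inverse-Gamma type integral. -/
lemma invGamma_integral {a s : ℝ} (ha : 0 < a) (hs : 0 < s) :
    ∫ u in Ioi (0 : ℝ), Real.exp (-(a / u)) * u ^ (-s - 1)
      = Real.Gamma s * a ^ (-s) := by
  have h := integral_comp_rpow_Ioi (E := ℝ)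
    (fun y : ℝ => y ^ (s - 1) * Real.exp (-(a * y))) (p := -1) (by norm_num)
  rw [Real.integral_rpow_mul_exp_neg_mul_Ioi hs ha] at h
  have hL : (∫ x in Ioi (0 : ℝ),
      (|(-1 : ℝ)| * x ^ ((-1 : ℝ) - 1)) •
        ((x ^ (-1 : ℝ)) ^ (s - 1) * Real.exp (-(a * x ^ (-1 : ℝ)))))
      = ∫ u in Ioi (0 : ℝ), Real.exp (-(a / u)) * u ^ (-s - 1) := by
    refine setIntegral_congr_fun measurableSet_Ioi (fun x hx => ?_)
    have hx0 : (0 : ℝ) < x := hx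
    rw [smul_eq_mul, show ((-1 : ℝ) - 1) = (-2 : ℝ) by norm_num, Real.rpow_neg_one,
      abs_neg, abs_one, one_mul]
    rw [Real.inv_rpow hx0.le, ← Real.rpow_neg hx0.le]
    rw [show a * x⁻¹ = a / x by ring]
    rw [show x ^ (-2 : ℝ) * (x ^ (-(s - 1)) * Real.exp (-(a / x)))
        = Real.exp (-(a / x)) * (x ^ (-(s - 1)) * x ^ (-2 : ℝ)) from by ring,
      ← Real.rpow_add hx0, show -(s - 1) + (-2 : ℝ) = -s - 1 from by ring]
  rw [hL] at h
  rw [h, one_div, Real.inv_rpow ha.le, ← Real.rpow_neg ha.le, mul_comm]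
lemma key_weight (N : ℝ) (hN : 0 < N) (ρ1 ρ2 : ℝ) (h1 : 0 < ρ1) (h2 : 0 < ρ2)
    (D u : ℝ) (hD : 0 < D) (hu : 0 < u) :
    Real.exp (-(D ^ 2) / (10 * u)) * (1 + Real.sqrt u / ρ1 + Real.sqrt u / ρ2) ^ (-N) ≤
      (1 + 10 ^ (⌈N⌉₊) * (Nat.factorial ⌈N⌉₊ : ℝ)) * (1 + D / ρ1 + D / ρ2) ^ (-N) := by
  set m := ⌈N⌉₊ with hm
  have hsu : 0 < Real.sqrt u := Real.sqrt_pos.mpr hu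
  set r : ℝ := D / Real.sqrt u with hr_def
  have hr : 0 < r := div_pos hD hsu
  have hrsu : r * Real.sqrt u = D := div_mul_cancel₀ _ hsu.ne'
  set Ru : ℝ := 1 + Real.sqrt u / ρ1 + Real.sqrt u / ρ2 with hRu
  set RD : ℝ := 1 + D / ρ1 + D / ρ2 with hRD
  have hRu1 : (1 : ℝ) ≤ Ru := by
    have a1 := div_nonneg hsu.le h1.le
    have a2 := div_nonneg hsu.le h2.le
    simp only [hRu]; linarith
  have hRD1 : (1 : ℝ) ≤ RD := by
    have a1 := div_nonneg hD.le h1.le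
    have a2 := div_nonneg hD.le h2.le
    simp only [hRD]; linarith
  have hRu0 : (0 : ℝ) < Ru := lt_of_lt_of_le one_pos hRu1
  have hRD0 : (0 : ℝ) < RD := lt_of_lt_of_le one_pos hRD1
  have hmax0 : (0 : ℝ) < max 1 r := lt_of_lt_of_le one_pos (le_max_left _ _)
  have hcomp : RD ≤ max 1 r * Ru := by
    rcases le_total r 1 with h | h
    · have hDu : D ≤ Real.sqrt u := by nlinarith
      rw [max_eq_left h, one_mul, hRD, hRu]
      gcongr
    · rw [max_eq_right h]
      have e1 : r * (Real.sqrt u / ρ1) = D / ρ1 := by rw [← hrsu]; ring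
      have e2 : r * (Real.sqrt u / ρ2) = D / ρ2 := by rw [← hrsu]; ring
      have : r * Ru = r + D / ρ1 + D / ρ2 := by
        rw [hRu, mul_add, mul_add, mul_one, e1, e2]
      rw [this, hRD]; linarith
  have hW : Ru ^ (-N) ≤ (max 1 r) ^ N * RD ^ (-N) := by
    have hQ : 0 < Ru ^ N := Real.rpow_pos_of_pos hRu0 N
    have hP : 0 < RD ^ N := Real.rpow_pos_of_pos hRD0 N
    have hpow : RD ^ N ≤ (max 1 r) ^ N * Ru ^ N := by
      rw [← Real.mul_rpow hmax0.le hRu0.le]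
      exact Real.rpow_le_rpow hRD0.le hcomp hN.le
    rw [Real.rpow_neg hRu0.le, Real.rpow_neg hRD0.le]
    have h' : 1 / (Ru ^ N) ≤ ((max 1 r) ^ N) / (RD ^ N) := by
      rw [div_le_div_iff₀ hQ hP]
      linarith
    simpa [one_div, div_eq_mul_inv] using h'
  have hrsq : r ^ 2 = D ^ 2 / u := by
    rw [hr_def, div_pow, Real.sq_sqrt hu.le]
  have hexp_eq : -(D ^ 2) / (10 * u) = -(r ^ 2 / 10) := by
    rw [hrsq]; field_simp
  have hMpos : (0 : ℝ) ≤ (r ^ 2) ^ m := by positivity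
  have h1' : (max 1 r) ^ N ≤ 1 + (r ^ 2) ^ m := by
    rcases le_total r 1 with h | h
    · rw [max_eq_left h, Real.one_rpow]; linarith
    · rw [max_eq_right h]
      have hb : r ^ N ≤ r ^ (m : ℝ) := Real.rpow_le_rpow_of_exponent_le h (Nat.le_ceil N)
      rw [Real.rpow_natCast] at hb
      have h2' : r ^ m ≤ (r ^ 2) ^ m := by
        rw [← pow_mul]
        exact pow_le_pow_right₀ h (by omega)
      linarith
  have h2' : (r ^ 2) ^ m * Real.exp (-(r ^ 2 / 10)) ≤ 10 ^ m * (Nat.factorial m : ℝ) := by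
    have hfact : (0 : ℝ) < (Nat.factorial m : ℝ) := by positivity
    have hle := Real.pow_div_factorial_le_exp (x := r ^ 2 / 10) (by positivity) m
    rw [div_le_iff₀ hfact] at hle
    have hsplit : (r ^ 2) ^ m = 10 ^ m * (r ^ 2 / 10) ^ m := by
      rw [← mul_pow]; congr 1; field_simp
    rw [Real.exp_neg, mul_inv_le_iff₀ (Real.exp_pos _), hsplit]
    calc (10 : ℝ) ^ m * (r ^ 2 / 10) ^ m
        ≤ 10 ^ m * (Real.exp (r ^ 2 / 10) * (Nat.factorial m : ℝ)) := by
          gcongr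
      _ = 10 ^ m * (Nat.factorial m : ℝ) * Real.exp (r ^ 2 / 10) := by ring
  have hexp1 : Real.exp (-(r ^ 2 / 10)) ≤ 1 := by
    rw [Real.exp_le_one_iff]; nlinarith [sq_nonneg r]
  have hexpM : Real.exp (-(D ^ 2) / (10 * u)) * (max 1 r) ^ N ≤ 1 + 10 ^ m * (Nat.factorial m : ℝ) := by
    rw [hexp_eq]
    calc Real.exp (-(r ^ 2 / 10)) * (max 1 r) ^ N
        ≤ Real.exp (-(r ^ 2 / 10)) * (1 + (r ^ 2) ^ m) :=
          mul_le_mul_of_nonneg_left h1' (Real.exp_nonneg _)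
      _ = Real.exp (-(r ^ 2 / 10)) + (r ^ 2) ^ m * Real.exp (-(r ^ 2 / 10)) := by ring
      _ ≤ 1 + 10 ^ m * (Nat.factorial m : ℝ) := add_le_add hexp1 h2'
  calc Real.exp (-(D ^ 2) / (10 * u)) * Ru ^ (-N)
      ≤ Real.exp (-(D ^ 2) / (10 * u)) * ((max 1 r) ^ N * RD ^ (-N)) :=
        mul_le_mul_of_nonneg_left hW (Real.exp_nonneg _)
    _ = (Real.exp (-(D ^ 2) / (10 * u)) * (max 1 r) ^ N) * RD ^ (-N) := by ring
    _ ≤ (1 + 10 ^ m * (Nat.factorial m : ℝ)) * RD ^ (-N) :=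
        mul_le_mul_of_nonneg_right hexpM (Real.rpow_nonneg hRD0.le _)

theorem stmt_3 (n : ℕ) (hn : 1 ≤ n)
    (ρ : EuclideanSpace ℝ (Fin n) → ℝ) (hρ : ∀ x, 0 < ρ x)
    (N : ℝ) (hN : 0 < N)
    (k : ℝ → EuclideanSpace ℝ (Fin n) → EuclideanSpace ℝ (Fin n) → ℝ)
    (hkmeas : Measurable fun p : ℝ × EuclideanSpace ℝ (Fin n) × EuclideanSpace ℝ (Fin n) =>
      k p.1 p.2.1 p.2.2)
    (hk0 : ∀ (u : ℝ) (x y : EuclideanSpace ℝ (Fin n)), 0 < u → 0 ≤ k u x y)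
    (C₀ : ℝ) (hC₀ : 0 < C₀)
    (hk : ∀ (u : ℝ) (x y : EuclideanSpace ℝ (Fin n)), 0 < u →
      k u x y ≤ C₀ * u ^ (-(n : ℝ) / 2) * Real.exp (-(dist x y ^ 2) / (5 * u)) *
        (1 + Real.sqrt u / ρ x + Real.sqrt u / ρ y) ^ (-N)) :
    ∃ C > (0 : ℝ), ∀ (x y : EuclideanSpace ℝ (Fin n)) (t : ℝ), 0 < t →
      (t / (2 * Real.sqrt Real.pi)) *
          ∫ u in Ioi (0 : ℝ), Real.exp (-(t ^ 2) / (4 * u)) * u ^ (-(3 : ℝ) / 2) * k u x y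
        ≤ C * t * (dist x y ^ 2 + t ^ 2) ^ (-((n : ℝ) + 1) / 2) *
          (1 + Real.sqrt (dist x y ^ 2 + t ^ 2) / ρ x +
            Real.sqrt (dist x y ^ 2 + t ^ 2) / ρ y) ^ (-N) := by
  have hs_pos : (0 : ℝ) < ((n : ℝ) + 1) / 2 := by positivity
  have hΓ : 0 < Real.Gamma (((n : ℝ) + 1) / 2) := Real.Gamma_pos_of_pos hs_pos
  have hπ : (0 : ℝ) < 2 * Real.sqrt Real.pi := by
    have := Real.sqrt_pos.mpr Real.pi_pos; linarith
  refine ⟨C₀ * (1 + 10 ^ ⌈N⌉₊ * (Nat.factorial ⌈N⌉₊ : ℝ)) * Real.Gamma (((n : ℝ) + 1) / 2)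
      * 10 ^ (((n : ℝ) + 1) / 2) / (2 * Real.sqrt Real.pi), ?_, ?_⟩
  · have hM : (0 : ℝ) < 1 + 10 ^ ⌈N⌉₊ * (Nat.factorial ⌈N⌉₊ : ℝ) := by positivity
    have h10 : (0 : ℝ) < (10 : ℝ) ^ (((n : ℝ) + 1) / 2) := Real.rpow_pos_of_pos (by norm_num) _
    exact div_pos (mul_pos (mul_pos (mul_pos hC₀ hM) hΓ) h10) hπ
  intro x y t ht
  set s : ℝ := ((n : ℝ) + 1) / 2 with hs_def
  set M : ℝ := 1 + 10 ^ ⌈N⌉₊ * (Nat.factorial ⌈N⌉₊ : ℝ) with hM_def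
  have hMpos : (0 : ℝ) < M := by rw [hM_def]; positivity
  set D2 : ℝ := dist x y ^ 2 + t ^ 2 with hD2def
  have hD2 : (0 : ℝ) < D2 := by rw [hD2def]; positivity
  set D : ℝ := Real.sqrt D2 with hD_def
  have hD0 : (0 : ℝ) < D := Real.sqrt_pos.mpr hD2
  have hDsq : D ^ 2 = D2 := Real.sq_sqrt hD2.le
  set a : ℝ := D2 / 10 with ha_def
  have ha : (0 : ℝ) < a := by rw [ha_def]; positivity
  set RD : ℝ := 1 + D / ρ x + D / ρ y with hRD_def
  have hRD0 : (0 : ℝ) ≤ RD := by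
    have a1 := div_nonneg hD0.le (hρ x).le
    have a2 := div_nonneg hD0.le (hρ y).le
    rw [hRD_def]; linarith
  have hRDN : (0 : ℝ) ≤ RD ^ (-N) := Real.rpow_nonneg hRD0 _
  -- pointwise bound
  have hptwise : ∀ u : ℝ, u ∈ Ioi (0 : ℝ) →
      Real.exp (-(t ^ 2) / (4 * u)) * u ^ (-(3 : ℝ) / 2) * k u x y ≤
        (C₀ * M * RD ^ (-N)) * (Real.exp (-(a / u)) * u ^ (-s - 1)) := by
    intro u hu
    have hu0 : (0 : ℝ) < u := hu
    have hk' := hk u x y hu0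
    have hkey := key_weight N hN (ρ x) (ρ y) (hρ x) (hρ y) D u hD0 hu0
    rw [hDsq, ← hM_def, ← hRD_def] at hkey
    have hRu0 : (0 : ℝ) ≤ 1 + Real.sqrt u / ρ x + Real.sqrt u / ρ y := by
      have a1 := div_nonneg (Real.sqrt_nonneg u) (hρ x).le
      have a2 := div_nonneg (Real.sqrt_nonneg u) (hρ y).le
      linarith
    have hRuN : (0 : ℝ) ≤ (1 + Real.sqrt u / ρ x + Real.sqrt u / ρ y) ^ (-N) :=
      Real.rpow_nonneg hRu0 _
    calc Real.exp (-(t ^ 2) / (4 * u)) * u ^ (-(3 : ℝ) / 2) * k u x y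
        ≤ Real.exp (-(t ^ 2) / (4 * u)) * u ^ (-(3 : ℝ) / 2) *
            (C₀ * u ^ (-(n : ℝ) / 2) * Real.exp (-(dist x y ^ 2) / (5 * u)) *
              (1 + Real.sqrt u / ρ x + Real.sqrt u / ρ y) ^ (-N)) :=
          mul_le_mul_of_nonneg_left hk' (by positivity)
      _ = C₀ * (u ^ (-(3 : ℝ) / 2) * u ^ (-(n : ℝ) / 2)) *
            ((Real.exp (-(t ^ 2) / (4 * u)) * Real.exp (-(dist x y ^ 2) / (5 * u))) *
              (1 + Real.sqrt u / ρ x + Real.sqrt u / ρ y) ^ (-N)) := by ring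
      _ ≤ C₀ * (u ^ (-(3 : ℝ) / 2) * u ^ (-(n : ℝ) / 2)) *
            ((Real.exp (-(a / u)) * Real.exp (-D2 / (10 * u))) *
              (1 + Real.sqrt u / ρ x + Real.sqrt u / ρ y) ^ (-N)) := by
          have hee : Real.exp (-(t ^ 2) / (4 * u)) * Real.exp (-(dist x y ^ 2) / (5 * u))
              ≤ Real.exp (-(a / u)) * Real.exp (-D2 / (10 * u)) := by
            rw [← Real.exp_add, ← Real.exp_add]
            apply Real.exp_le_exp.mpr
            have heq : (-(a / u) + -D2 / (10 * u)) -
                (-(t ^ 2) / (4 * u) + -(dist x y ^ 2) / (5 * u)) = t ^ 2 / (20 * u) := by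
              rw [ha_def, hD2def]; field_simp; ring
            have hnn : (0 : ℝ) ≤ t ^ 2 / (20 * u) := by positivity
            linarith
          exact mul_le_mul_of_nonneg_left
            (mul_le_mul_of_nonneg_right hee hRuN) (by positivity)
      _ ≤ C₀ * (u ^ (-(3 : ℝ) / 2) * u ^ (-(n : ℝ) / 2)) *
            (Real.exp (-(a / u)) * (M * RD ^ (-N))) := by
          have h' : (Real.exp (-(a / u)) * Real.exp (-D2 / (10 * u))) *
              (1 + Real.sqrt u / ρ x + Real.sqrt u / ρ y) ^ (-N)
              ≤ Real.exp (-(a / u)) * (M * RD ^ (-N)) := by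
            rw [mul_assoc]
            exact mul_le_mul_of_nonneg_left hkey (Real.exp_nonneg _)
          exact mul_le_mul_of_nonneg_left h' (by positivity)
      _ = (C₀ * M * RD ^ (-N)) * (Real.exp (-(a / u)) * u ^ (-s - 1)) := by
          rw [← Real.rpow_add hu0,
            show (-(3 : ℝ) / 2 + -(n : ℝ) / 2) = -s - 1 from by rw [hs_def]; ring]
          ring
  -- integral comparison
  have hint : IntegrableOn
      (fun u : ℝ => (C₀ * M * RD ^ (-N)) * (Real.exp (-(a / u)) * u ^ (-s - 1)))
      (Ioi (0 : ℝ)) :=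
    (invGamma_integrableOn ha hs_pos).const_mul _
  have hmono : (∫ u in Ioi (0 : ℝ),
        Real.exp (-(t ^ 2) / (4 * u)) * u ^ (-(3 : ℝ) / 2) * k u x y)
      ≤ ∫ u in Ioi (0 : ℝ),
        (C₀ * M * RD ^ (-N)) * (Real.exp (-(a / u)) * u ^ (-s - 1)) := by
    apply integral_mono_of_nonneg
    · filter_upwards [ae_restrict_mem measurableSet_Ioi] with u hu
      have hu0 : (0 : ℝ) < u := hu
      have := hk0 u x y hu0
      have h1 : (0 : ℝ) ≤ Real.exp (-(t ^ 2) / (4 * u)) * u ^ (-(3 : ℝ) / 2) := by positivity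
      exact mul_nonneg h1 this
    · exact hint
    · filter_upwards [ae_restrict_mem measurableSet_Ioi] with u hu
      exact hptwise u hu
  have hval : (∫ u in Ioi (0 : ℝ),
        (C₀ * M * RD ^ (-N)) * (Real.exp (-(a / u)) * u ^ (-s - 1)))
      = (C₀ * M * RD ^ (-N)) * (Real.Gamma s * a ^ (-s)) := by
    rw [integral_const_mul, invGamma_integral ha hs_pos]
  have haval : a ^ (-s) = 10 ^ s * D2 ^ (-s) := by
    rw [ha_def, Real.rpow_neg ha.le, Real.div_rpow hD2.le (by norm_num : (0:ℝ) ≤ 10),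
      inv_div, div_eq_mul_inv, ← Real.rpow_neg hD2.le, mul_comm]
  rw [show -((n : ℝ) + 1) / 2 = -s from by rw [hs_def]; ring]
  calc (t / (2 * Real.sqrt Real.pi)) *
        ∫ u in Ioi (0 : ℝ), Real.exp (-(t ^ 2) / (4 * u)) * u ^ (-(3 : ℝ) / 2) * k u x y
      ≤ (t / (2 * Real.sqrt Real.pi)) *
        ((C₀ * M * RD ^ (-N)) * (Real.Gamma s * a ^ (-s))) := by
        apply mul_le_mul_of_nonneg_left _ (by positivity)
        exact le_of_le_of_eq hmono hval
    _ = C₀ * M * Real.Gamma s * 10 ^ s / (2 * Real.sqrt Real.pi) * t *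
          D2 ^ (-s) * RD ^ (-N) := by
        rw [haval]; ring
end

section
/- Let β > 0 and m = ⌊β⌋ + 1. There exist constants c, C > 0 (depending only on m and β) such that for all t, v > 0: |∫_0^∞ H_{m−1}((t+s)/(2v)) e^{−(t+s)²/(4v²)} s^{m−β−1} ds| ≤ C e^{−c t²/v²} v^{m−β}. -/
open MeasureTheory Set

/-- The (physicists') Hermite polynomial function,
`H_k(r) = (−1)^k e^{r²} (d/dr)^k e^{−r²}`. -/
noncomputable def hermiteH (k : ℕ) (r : ℝ) : ℝ :=
  (-1) ^ k * Real.exp (r ^ 2) * iteratedDeriv k (fun s => Real.exp (-(s ^ 2))) r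

lemma gauss_iteratedDeriv (k : ℕ) : ∃ P : Polynomial ℝ, ∀ x : ℝ,
    iteratedDeriv k (fun s => Real.exp (-(s ^ 2))) x = P.eval x * Real.exp (-(x ^ 2)) := by
  induction k with
  | zero => exact ⟨1, fun x => by simp⟩
  | succ k ih =>
    obtain ⟨P, hP⟩ := ih
    refine ⟨P.derivative - Polynomial.C 2 * Polynomial.X * P, fun x => ?_⟩
    rw [iteratedDeriv_succ, funext hP]
    have h1 : HasDerivAt (fun x : ℝ => Real.exp (-(x ^ 2)))
        (Real.exp (-(x ^ 2)) * -(2 * x)) x := by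
      have h := ((hasDerivAt_pow 2 x).neg).exp
      convert h using 1 <;> simp [Pi.neg_apply]
    have h2 := (P.hasDerivAt x).mul h1
    rw [show (fun x => Polynomial.eval x P * Real.exp (-x ^ 2)) = ((fun x => Polynomial.eval x P) * fun x => Real.exp (-x ^ 2)) from rfl, h2.deriv]
    simp only [Polynomial.eval_sub, Polynomial.eval_mul, Polynomial.eval_C, Polynomial.eval_X]
    ring

lemma abs_pow_le_exp (i : ℕ) (x : ℝ) :
    |x| ^ i ≤ (1 + 2 ^ i * (i.factorial : ℝ)) * Real.exp (x ^ 2 / 2) := by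
  have hexp : (1 : ℝ) ≤ Real.exp (x ^ 2 / 2) := Real.one_le_exp (by positivity)
  have hfac : (0 : ℝ) < (i.factorial : ℝ) := by exact_mod_cast i.factorial_pos
  have key : (x ^ 2 / 2) ^ i ≤ (i.factorial : ℝ) * Real.exp (x ^ 2 / 2) := by
    have h1 : (x ^ 2 / 2) ^ i / (i.factorial : ℝ) ≤ Real.exp (x ^ 2 / 2) := by
      calc (x ^ 2 / 2) ^ i / (i.factorial : ℝ)
          ≤ ∑ j ∈ Finset.range (i + 1), (x ^ 2 / 2) ^ j / (j.factorial : ℝ) := by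
            refine Finset.single_le_sum (f := fun j => (x ^ 2 / 2) ^ j / (j.factorial : ℝ))
              (fun j _ => by positivity) (Finset.self_mem_range_succ i)
        _ ≤ Real.exp (x ^ 2 / 2) := Real.sum_le_exp_of_nonneg (by positivity) _
    calc (x ^ 2 / 2) ^ i = ((x ^ 2 / 2) ^ i / (i.factorial : ℝ)) * (i.factorial : ℝ) := by
          field_simp
      _ ≤ Real.exp (x ^ 2 / 2) * (i.factorial : ℝ) := by
          exact mul_le_mul_of_nonneg_right h1 hfac.le
      _ = (i.factorial : ℝ) * Real.exp (x ^ 2 / 2) := by ring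
  rcases le_total |x| 1 with h | h
  · calc |x| ^ i ≤ 1 ^ i := pow_le_pow_left₀ (abs_nonneg x) h i
      _ = 1 := one_pow i
      _ ≤ (1 + 2 ^ i * (i.factorial : ℝ)) * Real.exp (x ^ 2 / 2) := by
        nlinarith [mul_le_mul_of_nonneg_left hexp
            (show (0:ℝ) ≤ 1 + 2 ^ i * (i.factorial : ℝ) by positivity),
          mul_nonneg (pow_nonneg (by norm_num : (0:ℝ) ≤ 2) i) hfac.le]
  · have h2 : |x| ^ i ≤ |x| ^ (2 * i) := pow_le_pow_right₀ h (by omega)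
    have h3 : |x| ^ (2 * i) = (x ^ 2) ^ i := by
      rw [pow_mul, sq_abs]
    have h4 : (x ^ 2) ^ i = 2 ^ i * (x ^ 2 / 2) ^ i := by
      rw [← mul_pow]; ring_nf
    calc |x| ^ i ≤ (x ^ 2) ^ i := by rw [← h3]; exact h2
      _ = 2 ^ i * (x ^ 2 / 2) ^ i := h4
      _ ≤ 2 ^ i * ((i.factorial : ℝ) * Real.exp (x ^ 2 / 2)) := by
          exact mul_le_mul_of_nonneg_left key (by positivity)
      _ ≤ (1 + 2 ^ i * (i.factorial : ℝ)) * Real.exp (x ^ 2 / 2) := by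
        nlinarith [mul_le_mul_of_nonneg_left hexp
            (show (0:ℝ) ≤ 1 + 2 ^ i * (i.factorial : ℝ) by positivity),
          mul_nonneg (pow_nonneg (by norm_num : (0:ℝ) ≤ 2) i) hfac.le]

lemma poly_bound (P : Polynomial ℝ) :
    ∃ C > (0 : ℝ), ∀ x : ℝ, |P.eval x| ≤ C * Real.exp (x ^ 2 / 2) := by
  induction P using Polynomial.induction_on' with
  | add p q hp hq =>
    obtain ⟨C1, hC1, h1⟩ := hp
    obtain ⟨C2, hC2, h2⟩ := hq
    refine ⟨C1 + C2, by linarith, fun x => ?_⟩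
    calc |(p + q).eval x| ≤ |p.eval x| + |q.eval x| := by
          rw [Polynomial.eval_add]; exact abs_add_le _ _
      _ ≤ C1 * Real.exp (x ^ 2 / 2) + C2 * Real.exp (x ^ 2 / 2) := add_le_add (h1 x) (h2 x)
      _ = (C1 + C2) * Real.exp (x ^ 2 / 2) := by ring
  | monomial n a =>
    refine ⟨|a| * (1 + 2 ^ n * (n.factorial : ℝ)) + 1, by positivity, fun x => ?_⟩
    have hb := abs_pow_le_exp n x
    have hexp : (1 : ℝ) ≤ Real.exp (x ^ 2 / 2) := Real.one_le_exp (by positivity)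
    have hx : |(Polynomial.monomial n a).eval x| = |a| * |x| ^ n := by
      simp [Polynomial.eval_monomial, abs_mul, abs_pow]
    rw [hx]
    have h1 : |a| * |x| ^ n ≤ |a| * ((1 + 2 ^ n * (n.factorial : ℝ)) * Real.exp (x ^ 2 / 2)) :=
      mul_le_mul_of_nonneg_left hb (abs_nonneg a)
    nlinarith [abs_nonneg a, Real.exp_pos (x ^ 2 / 2)]

lemma hermite_gauss_bound (k : ℕ) : ∃ C > (0 : ℝ), ∀ x : ℝ,
    |hermiteH k x * Real.exp (-(x ^ 2))| ≤ C * Real.exp (-(x ^ 2) / 2) := by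
  obtain ⟨P, hP⟩ := gauss_iteratedDeriv k
  obtain ⟨C, hC, hCb⟩ := poly_bound P
  refine ⟨C, hC, fun x => ?_⟩
  have hne : Real.exp (x ^ 2) ≠ 0 := (Real.exp_pos _).ne'
  have key : hermiteH k x * Real.exp (-(x ^ 2)) = (-1) ^ k * P.eval x * Real.exp (-(x ^ 2)) := by
    unfold hermiteH
    rw [hP x, Real.exp_neg]
    field_simp
  rw [key, abs_mul, abs_mul, abs_pow, abs_neg, abs_one, one_pow, one_mul, Real.abs_exp]
  calc |P.eval x| * Real.exp (-(x ^ 2))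
      ≤ (C * Real.exp (x ^ 2 / 2)) * Real.exp (-(x ^ 2)) :=
        mul_le_mul_of_nonneg_right (hCb x) (Real.exp_pos _).le
    _ = C * Real.exp (-(x ^ 2) / 2) := by
        rw [mul_assoc, ← Real.exp_add, show x ^ 2 / 2 + -(x ^ 2) = -(x ^ 2) / 2 by ring]

theorem stmt_4 (β : ℝ) (hβ : 0 < β) (m : ℕ) (hm : m = Nat.floor β + 1) :
    ∃ c > (0 : ℝ), ∃ C > (0 : ℝ), ∀ t v : ℝ, 0 < t → 0 < v →
      |∫ s in Ioi (0 : ℝ),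
          hermiteH (m - 1) ((t + s) / (2 * v)) * Real.exp (-((t + s) ^ 2) / (4 * v ^ 2)) *
            s ^ ((m : ℝ) - β - 1)|
        ≤ C * Real.exp (-c * t ^ 2 / v ^ 2) * v ^ ((m : ℝ) - β) := by
  set α : ℝ := (m : ℝ) - β with hα_def
  have hα : 0 < α := by
    have h1 : β < (Nat.floor β : ℝ) + 1 := Nat.lt_floor_add_one β
    have h2 : (m : ℝ) = (Nat.floor β : ℝ) + 1 := by rw [hm]; push_cast; ring
    simp only [hα_def, h2]; linarith
  obtain ⟨C, hC, hCb⟩ := hermite_gauss_bound (m - 1)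
  have hΓ : 0 < Real.Gamma (α / 2) := Real.Gamma_pos_of_pos (by positivity)
  refine ⟨1 / 8, by norm_num, C * (8 : ℝ) ^ (α / 2) * Real.Gamma (α / 2) / 2,
    by positivity, fun t v ht hv => ?_⟩
  set b : ℝ := 1 / (8 * v ^ 2) with hb_def
  have hb : 0 < b := by positivity
  have hv2 : (0 : ℝ) < v ^ 2 := by positivity
  -- the dominating function
  set K : ℝ := C * Real.exp (-(t ^ 2) / (8 * v ^ 2)) with hK_def
  have hKpos : 0 < K := by positivity
  have hg : IntegrableOn (fun s : ℝ => K * (s ^ (α - 1) * Real.exp (-b * s ^ 2))) (Ioi 0) :=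
    (integrableOn_rpow_mul_exp_neg_mul_sq hb (by linarith)).const_mul K
  have hbound : ∀ s ∈ Ioi (0 : ℝ),
      ‖hermiteH (m - 1) ((t + s) / (2 * v)) * Real.exp (-((t + s) ^ 2) / (4 * v ^ 2)) *
          s ^ (α - 1)‖ ≤ K * (s ^ (α - 1) * Real.exp (-b * s ^ 2)) := by
    intro s hs
    have hs0 : 0 < s := hs
    set x : ℝ := (t + s) / (2 * v) with hx_def
    have hrp : (0 : ℝ) ≤ s ^ (α - 1) := Real.rpow_nonneg hs0.le _
    have hexp_eq : Real.exp (-((t + s) ^ 2) / (4 * v ^ 2)) = Real.exp (-(x ^ 2)) := by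
      congr 1
      rw [hx_def]; field_simp
      ring
    have hxx : -(x ^ 2) / 2 = -((t + s) ^ 2) / (8 * v ^ 2) := by
      rw [hx_def]; field_simp
      ring
    have hsplit : Real.exp (-(x ^ 2) / 2) ≤
        Real.exp (-(t ^ 2) / (8 * v ^ 2)) * Real.exp (-b * s ^ 2) := by
      rw [← Real.exp_add, hxx]
      apply Real.exp_le_exp.mpr
      have hbs : -b * s ^ 2 = -(s ^ 2) / (8 * v ^ 2) := by rw [hb_def]; ring
      rw [hbs, ← add_div]
      gcongr
      nlinarith [mul_pos ht hs0]
    calc ‖hermiteH (m - 1) x * Real.exp (-((t + s) ^ 2) / (4 * v ^ 2)) * s ^ (α - 1)‖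
        = |hermiteH (m - 1) x * Real.exp (-(x ^ 2))| * s ^ (α - 1) := by
          rw [hexp_eq, Real.norm_eq_abs, abs_mul, abs_of_nonneg hrp]
      _ ≤ (C * Real.exp (-(x ^ 2) / 2)) * s ^ (α - 1) :=
          mul_le_mul_of_nonneg_right (hCb x) hrp
      _ ≤ (C * (Real.exp (-(t ^ 2) / (8 * v ^ 2)) * Real.exp (-b * s ^ 2))) * s ^ (α - 1) :=
          mul_le_mul_of_nonneg_right
            (mul_le_mul_of_nonneg_left hsplit hC.le) hrp
      _ = K * (s ^ (α - 1) * Real.exp (-b * s ^ 2)) := by rw [hK_def]; ring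
  have hmain : |∫ s in Ioi (0 : ℝ),
      hermiteH (m - 1) ((t + s) / (2 * v)) * Real.exp (-((t + s) ^ 2) / (4 * v ^ 2)) *
        s ^ (α - 1)| ≤ ∫ s in Ioi (0 : ℝ), K * (s ^ (α - 1) * Real.exp (-b * s ^ 2)) := by
    rw [← Real.norm_eq_abs]
    exact norm_integral_le_of_norm_le hg
      ((ae_restrict_iff' measurableSet_Ioi).mpr (Filter.Eventually.of_forall hbound))
  have hval : ∫ s in Ioi (0 : ℝ), s ^ (α - 1) * Real.exp (-b * s ^ 2)
      = b ^ (-α / 2) * (1 / 2) * Real.Gamma (α / 2) := by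
    have h := integral_rpow_mul_exp_neg_mul_rpow (p := 2) (q := α - 1) (b := b)
      two_pos (by linarith) hb
    simp_rw [Real.rpow_two] at h
    rw [h]
    norm_num
  have hbv : b ^ (-α / 2) = (8 : ℝ) ^ (α / 2) * v ^ α := by
    have h8v : (0 : ℝ) < 8 * v ^ 2 := by positivity
    have h1 : b ^ (-α / 2) = (8 * v ^ 2) ^ (α / 2) := by
      rw [hb_def, one_div, neg_div, Real.rpow_neg (by positivity),
        Real.inv_rpow h8v.le, inv_inv]
    rw [h1, Real.mul_rpow (by norm_num) (by positivity), ← Real.rpow_natCast v 2,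
      ← Real.rpow_mul hv.le]
    rw [show ((2 : ℕ) : ℝ) * (α / 2) = α by push_cast; ring]
  have hexp2 : Real.exp (-(t ^ 2) / (8 * v ^ 2)) = Real.exp (-(1 / 8) * t ^ 2 / v ^ 2) := by
    congr 1
    field_simp
  refine hmain.trans (le_of_eq ?_)
  rw [integral_const_mul, hval, hbv, hK_def, hexp2]
  ring
end

section
/- Let 0 < δ′ < β and N > 0 and c > 0. Then there exists a constant C such that for all t > 0 and all ρ′ > 0: ∫_0^∞ e^{−c w²} w^{β−δ′} (1 + t/(w ρ′))^{−N} dw/w ≤ C (1 + t/ρ′)^{−N}. -/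
open MeasureTheory Set

theorem stmt_8 (δ' β : ℝ) (hδ' : 0 < δ') (hβ : δ' < β) (N : ℝ) (hN : 0 < N)
    (c : ℝ) (hc : 0 < c) :
    ∃ C > (0 : ℝ), ∀ t ρ' : ℝ, 0 < t → 0 < ρ' →
      (∫ w in Ioi (0 : ℝ),
          Real.exp (-c * w ^ 2) * w ^ (β - δ') * (1 + t / (w * ρ')) ^ (-N) / w)
        ≤ C * (1 + t / ρ') ^ (-N) := by
  set s : ℝ := β - δ' - 1 with hs
  have hs1 : (-1 : ℝ) < s := by rw [hs]; linarith
  have hs2 : (-1 : ℝ) < s + N := by linarith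
  set g : ℝ → ℝ := fun w => w ^ s * Real.exp (-c * w ^ 2)
    + w ^ (s + N) * Real.exp (-c * w ^ 2) with hg
  have hgint : IntegrableOn g (Ioi (0 : ℝ)) :=
    (integrableOn_rpow_mul_exp_neg_mul_sq hc hs1).add
      (integrableOn_rpow_mul_exp_neg_mul_sq hc hs2)
  have hgnn : ∀ w ∈ Ioi (0 : ℝ), 0 ≤ g w := by
    intro w hw
    have hw0 : (0:ℝ) ≤ w := le_of_lt hw
    have e := (Real.exp_pos (-c * w ^ 2)).le
    exact add_nonneg (mul_nonneg (Real.rpow_nonneg hw0 _) e)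
      (mul_nonneg (Real.rpow_nonneg hw0 _) e)
  have hgI : 0 ≤ ∫ w in Ioi (0 : ℝ), g w :=
    setIntegral_nonneg measurableSet_Ioi hgnn
  refine ⟨(∫ w in Ioi (0 : ℝ), g w) + 1, by linarith, ?_⟩
  intro t ρ' ht hρ
  have hA : 0 < (1 + t / ρ') ^ (-N) :=
    Real.rpow_pos_of_pos (by positivity) _
  set A : ℝ := (1 + t / ρ') ^ (-N) with hAdef
  -- pointwise bound
  have key : ∀ w ∈ Ioi (0 : ℝ),
      Real.exp (-c * w ^ 2) * w ^ (β - δ') * (1 + t / (w * ρ')) ^ (-N) / w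
        ≤ g w * A := by
    intro w hw
    have hw0 : (0:ℝ) < w := hw
    set M : ℝ := max 1 w with hM
    have hM0 : (0:ℝ) < M := lt_max_of_lt_left one_pos
    have hb : (0:ℝ) < 1 + t / ρ' := by positivity
    have ha : (0:ℝ) < 1 + t / (w * ρ') := by positivity
    have hba : 1 + t / ρ' ≤ M * (1 + t / (w * ρ')) := by
      rcases le_total w 1 with hw1 | hw1
      · have h1 : t / ρ' ≤ t / (w * ρ') := by
          apply div_le_div_of_nonneg_left ht.le (by positivity)
          nlinarith
        have hM1 : 1 ≤ M := le_max_left 1 w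
        nlinarith
      · have hMw : M = w := max_eq_right hw1
        rw [hMw]
        have : w * (t / (w * ρ')) = t / ρ' := by
          field_simp
        nlinarith [this]
    -- a^{-N} ≤ M^N * b^{-N}
    have h2 : (1 + t / (w * ρ')) ^ (-N) ≤ M ^ N * A := by
      have hdiv : (1 + t / ρ') / M ≤ 1 + t / (w * ρ') := by
        rw [div_le_iff₀ hM0]; linarith [hba]
      have := Real.rpow_le_rpow_of_nonpos (by positivity) hdiv (by linarith : -N ≤ 0)
      calc (1 + t / (w * ρ')) ^ (-N) ≤ ((1 + t / ρ') / M) ^ (-N) := this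
        _ = (1 + t / ρ') ^ (-N) * (M ^ (-N))⁻¹ := by
            rw [Real.div_rpow hb.le hM0.le, div_eq_mul_inv]
        _ = M ^ N * A := by
            rw [← Real.rpow_neg hM0.le, neg_neg, hAdef]; ring
    have hMN : M ^ N ≤ 1 + w ^ N := by
      rcases le_total w 1 with hw1 | hw1
      · have : M = 1 := max_eq_left hw1
        rw [this, Real.one_rpow]
        have := Real.rpow_nonneg hw0.le N
        linarith
      · have : M = w := max_eq_right hw1
        rw [this]; linarith
    have hpow : w ^ (β - δ') / w = w ^ s := by
      rw [hs, Real.rpow_sub hw0 (β - δ') 1, Real.rpow_one]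
    have e := (Real.exp_pos (-c * w ^ 2)).le
    have hwβ : (0:ℝ) ≤ w ^ (β - δ') := Real.rpow_nonneg hw0.le _
    calc Real.exp (-c * w ^ 2) * w ^ (β - δ') * (1 + t / (w * ρ')) ^ (-N) / w
        = (Real.exp (-c * w ^ 2) * (w ^ (β - δ') / w)) * (1 + t / (w * ρ')) ^ (-N) := by
          ring
      _ = (Real.exp (-c * w ^ 2) * w ^ s) * (1 + t / (w * ρ')) ^ (-N) := by rw [hpow]
      _ ≤ (Real.exp (-c * w ^ 2) * w ^ s) * (M ^ N * A) := by
          apply mul_le_mul_of_nonneg_left h2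
          exact mul_nonneg e (Real.rpow_nonneg hw0.le _)
      _ ≤ (Real.exp (-c * w ^ 2) * w ^ s) * ((1 + w ^ N) * A) := by
          apply mul_le_mul_of_nonneg_left _ (mul_nonneg e (Real.rpow_nonneg hw0.le _))
          exact mul_le_mul_of_nonneg_right hMN hA.le
      _ = g w * A := by
          simp only [hg]
          have : w ^ (s + N) = w ^ s * w ^ N := Real.rpow_add hw0 s N
          rw [this]; ring
  -- conclude via integral monotonicity
  have hginta : IntegrableOn (fun w => g w * A) (Ioi (0 : ℝ)) := hgint.mul_const A
  have hmono :
      (∫ w in Ioi (0 : ℝ),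
          Real.exp (-c * w ^ 2) * w ^ (β - δ') * (1 + t / (w * ρ')) ^ (-N) / w)
        ≤ ∫ w in Ioi (0 : ℝ), g w * A := by
    apply integral_mono_of_nonneg
    · filter_upwards [ae_restrict_mem measurableSet_Ioi] with w hw
      have hw0 : (0:ℝ) < w := hw
      have ha : (0:ℝ) < 1 + t / (w * ρ') := by positivity
      positivity
    · exact hginta
    · filter_upwards [ae_restrict_mem measurableSet_Ioi] with w hw
      exact key w hw
  calc (∫ w in Ioi (0 : ℝ),
          Real.exp (-c * w ^ 2) * w ^ (β - δ') * (1 + t / (w * ρ')) ^ (-N) / w)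
      ≤ ∫ w in Ioi (0 : ℝ), g w * A := hmono
    _ = (∫ w in Ioi (0 : ℝ), g w) * A := integral_mul_const _ _
    _ ≤ ((∫ w in Ioi (0 : ℝ), g w) + 1) * A := by nlinarith
end

section
/- Let 0 < α ≤ 1 and let f be a locally integrable function on ℝⁿ satisfying the BMO_L^α conditions with constant M. Then there exists a constant C (depending only on n and α) such that for every x ∈ ℝⁿ and every 0 < r < ρ(x), the average f_{B(x,r)} satisfies |f_{B(x,r)}| ≤ C M ρ(x)^α. -/
open MeasureTheory Metric Set

/-- The set whose supremum defines the critical radii function. -/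
noncomputable def rhoSet (n : ℕ) (V : EuclideanSpace ℝ (Fin n) → ℝ)
    (x : EuclideanSpace ℝ (Fin n)) : Set ℝ :=
  {r : ℝ | 0 < r ∧ r ^ ((2 : ℝ) - n) * ∫ y in ball x r, V y ≤ 1}

/-- The critical radii function `ρ` of Shen associated to the potential `V`. -/
noncomputable def rho (n : ℕ) (V : EuclideanSpace ℝ (Fin n) → ℝ)
    (x : EuclideanSpace ℝ (Fin n)) : ℝ :=
  sSup (rhoSet n V x)

/-- The average of `f` over the ball `B(x,r)`. -/
noncomputable def avgBall (n : ℕ) (f : EuclideanSpace ℝ (Fin n) → ℝ)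
    (x : EuclideanSpace ℝ (Fin n)) (r : ℝ) : ℝ :=
  ((volume (ball x r)).toReal)⁻¹ * ∫ y in ball x r, f y

/-- `f` satisfies the `BMO_L^α` conditions with constant `M`. -/
def BMOL (n : ℕ) (V : EuclideanSpace ℝ (Fin n) → ℝ) (α M : ℝ)
    (f : EuclideanSpace ℝ (Fin n) → ℝ) : Prop :=
  (∀ (x : EuclideanSpace ℝ (Fin n)) (r : ℝ), 0 < r →
    ((volume (ball x r)).toReal)⁻¹ * ∫ y in ball x r, |f y - avgBall n f x r|
      ≤ M * (volume (ball x r)).toReal ^ (α / n)) ∧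
  (∀ (x : EuclideanSpace ℝ (Fin n)) (r : ℝ), rho n V x ≤ r →
    ((volume (ball x r)).toReal)⁻¹ * ∫ y in ball x r, |f y|
      ≤ M * (volume (ball x r)).toReal ^ (α / n))

theorem stmt_9 (n : ℕ) (hn : 3 ≤ n) (q : ℝ) (hq : (n : ℝ) / 2 < q)
    (V : EuclideanSpace ℝ (Fin n) → ℝ) (hV0 : ∀ x, 0 ≤ V x) (hVmeas : Measurable V)
    (hVloc : ∀ (x : EuclideanSpace ℝ (Fin n)) (r : ℝ), 0 < r →
      IntegrableOn (fun y => V y ^ q) (ball x r))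
    (hVne : ¬ (V =ᵐ[volume] (0 : EuclideanSpace ℝ (Fin n) → ℝ)))
    (C_V : ℝ) (hCV : 0 < C_V)
    (hRH : ∀ (x : EuclideanSpace ℝ (Fin n)) (r : ℝ), 0 < r →
      (((volume (ball x r)).toReal)⁻¹ * ∫ y in ball x r, V y ^ q) ^ (1 / q)
        ≤ C_V * (((volume (ball x r)).toReal)⁻¹ * ∫ y in ball x r, V y))
    (α : ℝ) (hα0 : 0 < α) (hα1 : α ≤ 1)
    (f : EuclideanSpace ℝ (Fin n) → ℝ) (hf : LocallyIntegrable f volume)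
    (M : ℝ) (hM : 0 ≤ M) (hBMO : BMOL n V α M f) :
    ∃ C > (0 : ℝ), ∀ (x : EuclideanSpace ℝ (Fin n)) (r : ℝ), 0 < r → r < rho n V x →
      |avgBall n f x r| ≤ C * M * rho n V x ^ α := by
  classical
  have hn0 : (n : ℝ) ≠ 0 := by positivity
  let E := EuclideanSpace ℝ (Fin n)
  -- volume of the unit ball
  set c : ℝ := (volume (ball (0 : E) 1)).toReal with hc_def
  have hcpos : 0 < c := by
    apply ENNReal.toReal_pos (ne_of_gt (measure_ball_pos volume _ one_pos))
      (measure_ball_lt_top).ne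
  have hvol : ∀ (x : E) (r : ℝ), 0 < r → (volume (ball x r)).toReal = r ^ n * c := by
    intro x r hr
    rw [Measure.addHaar_ball_of_pos volume x hr, ENNReal.toReal_mul,
      ENNReal.toReal_ofReal (by positivity), finrank_euclideanSpace_fin]
  have hvolpos : ∀ (x : E) (r : ℝ), 0 < r → 0 < (volume (ball x r)).toReal := by
    intro x r hr; rw [hvol x r hr]; positivity
  -- the constant A
  set A : ℝ := c ^ (α / n) with hA_def
  have hApos : 0 < A := Real.rpow_pos_of_pos hcpos _
  have hpow : ∀ (x : E) (r : ℝ), 0 < r →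
      (volume (ball x r)).toReal ^ (α / n) = A * r ^ α := by
    intro x r hr
    rw [hvol x r hr, Real.mul_rpow (by positivity) hcpos.le, mul_comm]
    congr 1
    rw [← Real.rpow_natCast r n, ← Real.rpow_mul hr.le]
    congr 1
    field_simp
  -- integrability of f on balls
  have hfi : ∀ (x : E) (r : ℝ), IntegrableOn f (ball x r) volume := by
    intro x r
    exact (hf.integrableOn_isCompact (isCompact_closedBall x r)).mono_set
      ball_subset_closedBall
  -- key oscillation step
  have hstep : ∀ (x : E) (r s : ℝ), 0 < r → r ≤ s →
      |avgBall n f x r - avgBall n f x s| ≤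
        ((volume (ball x s)).toReal / (volume (ball x r)).toReal) *
          (M * (volume (ball x s)).toReal ^ (α / n)) := by
    intro x r s hr hrs
    have hs : 0 < s := hr.trans_le hrs
    have hvr := hvolpos x r hr
    have hvs := hvolpos x s hs
    set a := avgBall n f x s with ha_def
    have hsub : ball x r ⊆ ball x s := ball_subset_ball hrs
    have hint : IntegrableOn (fun y => |f y - a|) (ball x s) volume :=
      (((hfi x s).sub (integrableOn_const measure_ball_lt_top.ne)).abs)
    have h1 : avgBall n f x r - a =
        ((volume (ball x r)).toReal)⁻¹ * ∫ y in ball x r, (f y - a) := by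
      rw [integral_sub (hfi x r) (integrableOn_const measure_ball_lt_top.ne)]
      rw [setIntegral_const]
      simp only [smul_eq_mul, avgBall]
      field_simp
      rw [Measure.real, mul_comm]
    rw [h1]
    have h2 : |((volume (ball x r)).toReal)⁻¹ * ∫ y in ball x r, (f y - a)| ≤
        ((volume (ball x r)).toReal)⁻¹ * ∫ y in ball x r, |f y - a| := by
      rw [abs_mul, abs_of_nonneg (by positivity)]
      gcongr
      simpa [Real.norm_eq_abs] using
        norm_integral_le_integral_norm (μ := volume.restrict (ball x r)) (fun y => f y - a)
    refine h2.trans ?_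
    have h3 : ∫ y in ball x r, |f y - a| ≤ ∫ y in ball x s, |f y - a| := by
      apply setIntegral_mono_set hint
      · filter_upwards with y using abs_nonneg _
      · exact HasSubset.Subset.eventuallyLE hsub
    have h4 : ((volume (ball x s)).toReal)⁻¹ * ∫ y in ball x s, |f y - a|
        ≤ M * (volume (ball x s)).toReal ^ (α / n) := hBMO.1 x s hs
    calc ((volume (ball x r)).toReal)⁻¹ * ∫ y in ball x r, |f y - a|
        ≤ ((volume (ball x r)).toReal)⁻¹ * ∫ y in ball x s, |f y - a| := by gcongr
      _ = ((volume (ball x s)).toReal / (volume (ball x r)).toReal) *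
            (((volume (ball x s)).toReal)⁻¹ * ∫ y in ball x s, |f y - a|) := by
          field_simp
      _ ≤ ((volume (ball x s)).toReal / (volume (ball x r)).toReal) *
            (M * (volume (ball x s)).toReal ^ (α / n)) := by
          apply mul_le_mul_of_nonneg_left h4 (by positivity)
  -- geometric ratio
  set t : ℝ := (2 : ℝ) ^ (-α) with ht_def
  have ht0 : 0 < t := Real.rpow_pos_of_pos two_pos _
  have ht1 : t < 1 := Real.rpow_lt_one_of_one_lt_of_neg one_lt_two (by linarith)
  -- main induction
  have main : ∀ k : ℕ, ∀ (x : E) (r : ℝ), 0 < r → rho n V x ≤ 2 ^ k * r →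
      |avgBall n f x r| ≤
        A * (1 + 2 ^ n * ∑ j ∈ Finset.range k, t ^ j) * M * ((2 : ℝ) ^ k * r) ^ α := by
    intro k
    induction k with
    | zero =>
      intro x r hr hρ
      simp only [pow_zero, one_mul, Finset.range_zero, Finset.sum_empty, mul_zero, add_zero]
      have h1 : |avgBall n f x r| ≤
          ((volume (ball x r)).toReal)⁻¹ * ∫ y in ball x r, |f y| := by
        rw [avgBall, abs_mul, abs_of_nonneg (by positivity)]
        gcongr
        simpa [Real.norm_eq_abs] using
          norm_integral_le_integral_norm (μ := volume.restrict (ball x r)) f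
      have h2 := hBMO.2 x r (by simpa using hρ)
      rw [hpow x r hr] at h2
      calc |avgBall n f x r| ≤ _ := h1
        _ ≤ M * (A * r ^ α) := h2
        _ = A * 1 * M * r ^ α := by ring
    | succ k ih =>
      intro x r hr hρ
      have h2r : (0:ℝ) < 2 * r := by linarith
      have hρ' : rho n V x ≤ 2 ^ k * (2 * r) := by
        rw [show (2:ℝ) ^ k * (2 * r) = 2 ^ (k+1) * r by ring]; exact hρ
      have hIH := ih x (2 * r) h2r hρ'
      have hst := hstep x r (2 * r) hr (by linarith)
      -- simplify the volume ratio
      have hratio : (volume (ball x (2*r))).toReal / (volume (ball x r)).toReal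
          = 2 ^ n := by
        rw [hvol x _ h2r, hvol x r hr, mul_pow]
        field_simp
      rw [hratio, hpow x _ h2r] at hst
      -- the key exponent identity
      have hexp : (2 * r) ^ α = t ^ k * ((2 : ℝ) ^ (k+1) * r) ^ α := by
        have h1 : t ^ k = (2:ℝ) ^ (-(α * k)) := by
          rw [ht_def, ← Real.rpow_natCast ((2:ℝ) ^ (-α)) k,
            ← Real.rpow_mul (by norm_num : (0:ℝ) ≤ 2)]
          ring_nf
        have h2 : ((2:ℝ) ^ (k+1) : ℝ) ^ α = (2:ℝ) ^ (((k:ℝ)+1) * α) := by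
          rw [← Real.rpow_natCast (2:ℝ) (k+1), ← Real.rpow_mul (by norm_num : (0:ℝ) ≤ 2)]
          push_cast
          ring_nf
        rw [Real.mul_rpow (by norm_num : (0:ℝ) ≤ 2) hr.le,
          Real.mul_rpow (by positivity) hr.le, h1, h2, ← mul_assoc,
          ← Real.rpow_add two_pos]
        congr 2
        push_cast
        ring
      have htri : |avgBall n f x r| ≤
          |avgBall n f x r - avgBall n f x (2*r)| + |avgBall n f x (2*r)| := by
        calc |avgBall n f x r| = |(avgBall n f x r - avgBall n f x (2*r))
            + avgBall n f x (2*r)| := by ring_nf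
          _ ≤ _ := abs_add_le _ _
      have hsum : ∑ j ∈ Finset.range (k+1), t ^ j
          = (∑ j ∈ Finset.range k, t ^ j) + t ^ k := Finset.sum_range_succ _ _
      have hIH' : |avgBall n f x (2*r)| ≤
          A * (1 + 2 ^ n * ∑ j ∈ Finset.range k, t ^ j) * M * ((2:ℝ) ^ (k+1) * r) ^ α := by
        rw [show (2:ℝ) ^ (k+1) * r = 2 ^ k * (2 * r) by ring]
        exact hIH
      have hst' : |avgBall n f x r - avgBall n f x (2*r)| ≤
          2 ^ n * (M * (A * (t ^ k * ((2:ℝ) ^ (k+1) * r) ^ α))) := by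
        rw [← hexp]; exact hst
      have hsum_nonneg : (0:ℝ) ≤ ∑ j ∈ Finset.range k, t ^ j :=
        Finset.sum_nonneg fun j _ => by positivity
      calc |avgBall n f x r| ≤ _ := htri
        _ ≤ 2 ^ n * (M * (A * (t ^ k * ((2:ℝ) ^ (k+1) * r) ^ α)))
            + A * (1 + 2 ^ n * ∑ j ∈ Finset.range k, t ^ j) * M
              * ((2:ℝ) ^ (k+1) * r) ^ α := add_le_add hst' hIH'
        _ = A * (1 + 2 ^ n * ∑ j ∈ Finset.range (k+1), t ^ j) * M
              * ((2:ℝ) ^ (k+1) * r) ^ α := by rw [hsum]; ring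
  -- the constant
  have ht1' : 0 < 1 - t := by linarith
  set S : ℝ := 1 / (1 - t) with hS_def
  have hSpos : 0 < S := by positivity
  refine ⟨A * (1 + 2 ^ n * S) * 2, by positivity, ?_⟩
  intro x r hr hrρ
  set ρ := rho n V x with hρ_def
  have hρpos : 0 < ρ := hr.trans hrρ
  -- find the minimal k with ρ ≤ 2^k r
  have hex : ∃ k : ℕ, ρ ≤ 2 ^ k * r := by
    obtain ⟨k, hk⟩ := pow_unbounded_of_one_lt (ρ / r) (one_lt_two (α := ℝ))
    exact ⟨k, by rw [div_lt_iff₀ hr] at hk; linarith⟩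
  set k := Nat.find hex with hk_def
  have hk_spec : ρ ≤ 2 ^ k * r := Nat.find_spec hex
  have hk0 : k ≠ 0 := by
    intro h
    have := hk_spec
    rw [h] at this
    simp at this
    linarith
  have hk_min : ¬ (ρ ≤ 2 ^ (k - 1) * r) := Nat.find_min hex (Nat.sub_lt (Nat.pos_of_ne_zero hk0) one_pos)
  push_neg at hk_min
  have h2k : (2:ℝ) ^ k * r ≤ 2 * ρ := by
    have : (2:ℝ) ^ k = 2 * 2 ^ (k-1) := by
      rw [← pow_succ']
      congr 1
      omega
    rw [this]
    nlinarith [hk_min]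
  have hmain := main k x r hr hk_spec
  -- bound the geometric sum
  have hsumS : ∑ j ∈ Finset.range k, t ^ j ≤ S := by
    rw [geom_sum_eq ht1.ne k, hS_def]
    have heq : (t ^ k - 1) / (t - 1) = (1 - t ^ k) / (1 - t) := by
      rw [← neg_div_neg_eq]
      ring_nf
    rw [heq]
    exact div_le_div₀ (by norm_num) (by nlinarith [pow_pos ht0 k]) ht1' le_rfl
  -- bound (2^k r)^α ≤ 2 ρ^α
  have hfin : ((2:ℝ) ^ k * r) ^ α ≤ 2 * ρ ^ α := by
    calc ((2:ℝ) ^ k * r) ^ α ≤ (2 * ρ) ^ α := by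
          apply Real.rpow_le_rpow (by positivity) h2k hα0.le
      _ = 2 ^ α * ρ ^ α := Real.mul_rpow (by norm_num) hρpos.le
      _ ≤ 2 * ρ ^ α := by
          apply mul_le_mul_of_nonneg_right _ (by positivity)
          calc (2:ℝ) ^ α ≤ 2 ^ (1:ℝ) :=
              Real.rpow_le_rpow_of_exponent_le one_le_two hα1
            _ = 2 := Real.rpow_one 2
  have hsum_nonneg : (0:ℝ) ≤ ∑ j ∈ Finset.range k, t ^ j :=
    Finset.sum_nonneg fun j _ => by positivity
  calc |avgBall n f x r| ≤ A * (1 + 2 ^ n * ∑ j ∈ Finset.range k, t ^ j) * M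
        * ((2:ℝ) ^ k * r) ^ α := hmain
    _ ≤ A * (1 + 2 ^ n * S) * M * ((2:ℝ) ^ k * r) ^ α := by
        gcongr
    _ ≤ A * (1 + 2 ^ n * S) * M * (2 * ρ ^ α) := by
        apply mul_le_mul_of_nonneg_left hfin (by positivity)
    _ = A * (1 + 2 ^ n * S) * 2 * M * ρ ^ α := by ring
end

section
/- Let f be a locally integrable function on ℝⁿ satisfying the BMO_L^0 conditions with constant M. Then there exists a constant C (depending only on n) such that for every x ∈ ℝⁿ and every 0 < r < ρ(x), the average f_{B(x,r)} satisfies |f_{B(x,r)}| ≤ C (1 + log(ρ(x)/r)) M. -/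
open MeasureTheory Metric Set

lemma myvol (n : ℕ) (hn : 0 < n) (x : EuclideanSpace ℝ (Fin n)) {s : ℝ} (hs : 0 ≤ s) :
    (volume (ball x s)).toReal
      = s ^ n * (volume (ball (0 : EuclideanSpace ℝ (Fin n)) 1)).toReal := by
  haveI : Nontrivial (EuclideanSpace ℝ (Fin n)) :=
    Module.nontrivial_of_finrank_pos (R := ℝ) (by rw [finrank_euclideanSpace_fin]; exact hn)
  rw [Measure.addHaar_ball volume x hs, ENNReal.toReal_mul,
    ENNReal.toReal_ofReal (by positivity), finrank_euclideanSpace_fin]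

lemma myvol_double (n : ℕ) (hn : 0 < n) (x : EuclideanSpace ℝ (Fin n)) {s : ℝ} (hs : 0 ≤ s) :
    (volume (ball x (2*s))).toReal = 2^n * (volume (ball x s)).toReal := by
  rw [myvol n hn x hs, myvol n hn x (by positivity : (0:ℝ) ≤ 2*s)]; ring

lemma myvol_pos (n : ℕ) (x : EuclideanSpace ℝ (Fin n)) {s : ℝ} (hs : 0 < s) :
    0 < (volume (ball x s)).toReal :=
  ENNReal.toReal_pos (measure_ball_pos volume x hs).ne' measure_ball_lt_top.ne

lemma avg_step (n : ℕ) (hn : 0 < n) (f : EuclideanSpace ℝ (Fin n) → ℝ)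
    (hf : LocallyIntegrable f volume) (x : EuclideanSpace ℝ (Fin n)) (M : ℝ)
    (h1 : ∀ r : ℝ, 0 < r →
      ((volume (ball x r)).toReal)⁻¹ * ∫ y in ball x r, |f y - avgBall n f x r| ≤ M)
    {s : ℝ} (hs : 0 < s) :
    |avgBall n f x s - avgBall n f x (2*s)| ≤ 2^n * M := by
  have hfi : ∀ t : ℝ, IntegrableOn f (ball x t) volume := fun t =>
    (hf.integrableOn_isCompact (isCompact_closedBall x t)).mono_set ball_subset_closedBall
  set c := avgBall n f x (2*s) with hc
  set v := (volume (ball x s)).toReal with hvdef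
  have hv : 0 < v := myvol_pos n x hs
  have h2s : 0 < 2*s := by linarith
  have hw : (volume (ball x (2*s))).toReal = 2^n * v := myvol_double n hn x hs.le
  have key : avgBall n f x s - c = v⁻¹ * ∫ y in ball x s, (f y - c) := by
    rw [integral_sub (hfi s) (integrableOn_const measure_ball_lt_top.ne),
      setIntegral_const]
    simp only [avgBall, smul_eq_mul, measureReal_def, ← hvdef]
    field_simp
  have habs : IntegrableOn (fun y => |f y - c|) (ball x (2*s)) volume :=
    ((hfi (2*s)).sub (integrableOn_const measure_ball_lt_top.ne)).abs
  have step1 : |∫ y in ball x s, (f y - c)| ≤ ∫ y in ball x s, |f y - c| := by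
    simpa [Real.norm_eq_abs] using
      norm_integral_le_integral_norm (μ := volume.restrict (ball x s)) (fun y => f y - c)
  have step2 : ∫ y in ball x s, |f y - c| ≤ ∫ y in ball x (2*s), |f y - c| := by
    apply setIntegral_mono_set habs
    · filter_upwards with y using abs_nonneg _
    · exact HasSubset.Subset.eventuallyLE (ball_subset_ball (by linarith))
  have step3 : ∫ y in ball x (2*s), |f y - c| ≤ M * (2^n * v) := by
    have := h1 (2*s) h2s
    rw [hw] at this
    have hpos : (0:ℝ) < 2^n * v := by positivity
    rw [inv_mul_le_iff₀ hpos] at this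
    linarith [this]
  calc |avgBall n f x s - c| = v⁻¹ * |∫ y in ball x s, (f y - c)| := by
        rw [key, abs_mul, abs_inv, abs_of_pos hv]
    _ ≤ v⁻¹ * (M * (2^n * v)) := by
        apply mul_le_mul_of_nonneg_left _ (inv_nonneg.2 hv.le)
        exact step1.trans (step2.trans step3)
    _ = 2^n * M := by field_simp

lemma avg_iter (n : ℕ) (hn : 0 < n) (f : EuclideanSpace ℝ (Fin n) → ℝ)
    (hf : LocallyIntegrable f volume) (x : EuclideanSpace ℝ (Fin n)) (M : ℝ)
    (h1 : ∀ r : ℝ, 0 < r →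
      ((volume (ball x r)).toReal)⁻¹ * ∫ y in ball x r, |f y - avgBall n f x r| ≤ M)
    {r : ℝ} (hr : 0 < r) (k : ℕ) :
    |avgBall n f x r - avgBall n f x (2^k * r)| ≤ k * 2^n * M := by
  induction k with
  | zero => simp
  | succ k ih =>
    have hs : 0 < 2^k * r := by positivity
    have h2 : (2:ℝ)^(k+1) * r = 2 * (2^k * r) := by ring
    calc |avgBall n f x r - avgBall n f x (2^(k+1) * r)|
        ≤ |avgBall n f x r - avgBall n f x (2^k * r)|
          + |avgBall n f x (2^k * r) - avgBall n f x (2^(k+1) * r)| := abs_sub_le _ _ _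
      _ ≤ k * 2^n * M + 2^n * M := by
          gcongr
          rw [h2]; exact avg_step n hn f hf x M h1 hs
      _ = (k+1 : ℕ) * 2^n * M := by push_cast; ring

theorem stmt_10 (n : ℕ) (hn : 3 ≤ n) (q : ℝ) (hq : (n : ℝ) / 2 < q)
    (V : EuclideanSpace ℝ (Fin n) → ℝ) (hV0 : ∀ x, 0 ≤ V x) (hVmeas : Measurable V)
    (hVloc : ∀ (x : EuclideanSpace ℝ (Fin n)) (r : ℝ), 0 < r →
      IntegrableOn (fun y => V y ^ q) (ball x r))
    (hVne : ¬ (V =ᵐ[volume] (0 : EuclideanSpace ℝ (Fin n) → ℝ)))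
    (C_V : ℝ) (hCV : 0 < C_V)
    (hRH : ∀ (x : EuclideanSpace ℝ (Fin n)) (r : ℝ), 0 < r →
      (((volume (ball x r)).toReal)⁻¹ * ∫ y in ball x r, V y ^ q) ^ (1 / q)
        ≤ C_V * (((volume (ball x r)).toReal)⁻¹ * ∫ y in ball x r, V y))
    (f : EuclideanSpace ℝ (Fin n) → ℝ) (hf : LocallyIntegrable f volume)
    (M : ℝ) (hM : 0 ≤ M) (hBMO : BMOL n V 0 M f) :
    ∃ C > (0 : ℝ), ∀ (x : EuclideanSpace ℝ (Fin n)) (r : ℝ), 0 < r → r < rho n V x →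
      |avgBall n f x r| ≤ C * (1 + Real.log (rho n V x / r)) * M := by
  obtain ⟨hB1, hB2⟩ := hBMO
  have hn0 : 0 < n := by omega
  refine ⟨2^(n+1) + 1, by positivity, fun x r hr hrρ => ?_⟩
  set ρ := rho n V x with hρdef
  have hρ : 0 < ρ := hr.trans hrρ
  have h1 : ∀ s : ℝ, 0 < s →
      ((volume (ball x s)).toReal)⁻¹ * ∫ y in ball x s, |f y - avgBall n f x s| ≤ M := by
    intro s hs
    simpa using hB1 x s hs
  set t := ρ / r with htdef
  have ht1 : 1 < t := (one_lt_div hr).2 hrρ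
  set L := Real.log t with hLdef
  have hL0 : 0 ≤ L := Real.log_nonneg ht1.le
  set k := ⌈Real.logb 2 t⌉₊ with hkdef
  have hlogb0 : 0 ≤ Real.logb 2 t := Real.logb_nonneg one_lt_two ht1.le
  have hks : ρ ≤ 2^k * r := by
    have h2k : t ≤ 2^k := by
      calc t = 2 ^ Real.logb 2 t :=
            (Real.rpow_logb two_pos (by norm_num) (by linarith)).symm
        _ ≤ 2 ^ (k:ℝ) := Real.rpow_le_rpow_of_exponent_le one_le_two (Nat.le_ceil _)
        _ = 2^k := Real.rpow_natCast 2 k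
    calc ρ = t * r := by rw [htdef, div_mul_cancel₀ _ hr.ne']
      _ ≤ 2^k * r := mul_le_mul_of_nonneg_right h2k hr.le
  have hs : 0 < 2^k * r := by positivity
  have htop : |avgBall n f x (2^k * r)| ≤ M := by
    have h2 := hB2 x (2^k*r) hks
    simp only [zero_div, Real.rpow_zero, mul_one] at h2
    have hv : 0 < (volume (ball x (2^k*r))).toReal := myvol_pos n x hs
    have habs : |∫ y in ball x (2^k*r), f y| ≤ ∫ y in ball x (2^k*r), |f y| := by
      simpa [Real.norm_eq_abs] using
        norm_integral_le_integral_norm (μ := volume.restrict (ball x (2^k*r))) f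
    rw [avgBall, abs_mul, abs_inv, abs_of_pos hv]
    calc ((volume (ball x (2^k*r))).toReal)⁻¹ * |∫ y in ball x (2^k*r), f y|
        ≤ ((volume (ball x (2^k*r))).toReal)⁻¹ * ∫ y in ball x (2^k*r), |f y| :=
          mul_le_mul_of_nonneg_left habs (inv_nonneg.2 hv.le)
      _ ≤ M := h2
  have hiter := avg_iter n hn0 f hf x M h1 hr k
  have hkb : (k:ℝ) ≤ 2*L + 1 := by
    have hc : (k:ℝ) < Real.logb 2 t + 1 := Nat.ceil_lt_add_one hlogb0
    have h2L : Real.logb 2 t ≤ 2*L := by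
      rw [Real.logb, div_le_iff₀ (Real.log_pos one_lt_two)]
      nlinarith [Real.log_two_gt_d9, hL0]
    linarith
  have hpow : (0:ℝ) < 2^n := by positivity
  have h2n1 : (2:ℝ)^(n+1) = 2*2^n := by ring
  have hmain : |avgBall n f x r| ≤ (k:ℝ) * 2^n * M + M := by
    calc |avgBall n f x r|
        = |(avgBall n f x r - avgBall n f x (2^k*r)) + avgBall n f x (2^k*r)| := by ring_nf
      _ ≤ |avgBall n f x r - avgBall n f x (2^k*r)| + |avgBall n f x (2^k*r)| := abs_add_le _ _
      _ ≤ (k:ℝ) * 2^n * M + M := add_le_add hiter htop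
  have hfin : (k:ℝ) * 2^n * M + M ≤ (2^(n+1) + 1) * (1 + L) * M := by
    nlinarith [mul_nonneg hL0 hM, mul_nonneg hpow.le hM,
      mul_le_mul_of_nonneg_right (mul_le_mul_of_nonneg_right hkb hpow.le) hM,
      mul_nonneg (mul_nonneg hL0 hpow.le) hM]
  calc |avgBall n f x r| ≤ (k:ℝ) * 2^n * M + M := hmain
    _ ≤ (2^(n+1) + 1) * (1 + Real.log (ρ / r)) * M := by rw [← htdef, ← hLdef]; exact hfin
end

section
/- Let 0 < α ≤ 1 and γ ≥ α. Let q_t(x,y) (t > 0, x, y ∈ ℝⁿ) be a measurable family such that for every N > 0 there is a constant C_N with |q_t(x,y)| ≤ C_N (1 + t/ρ(x) + t/ρ(y))^{−N} t^{−n} (1 + |x−y|/t)^{−(n+γ)}. Let g be supported in a ball B(x₀,r) with r ≤ ρ(x₀) and ‖g‖_∞ ≤ |B(x₀,r)|^{−(n+α)/n}, and suppose moreover that ∫ g = 0 whenever r < ρ(x₀)/4. Then there exists a constant C (depending on n, γ, α, x₀, r, the kernel constants, q and the reverse Hölder constant of V) such that sup_{t>0} |∫_{ℝⁿ} q_t(x,y)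 g(y) dy| ≤ C (1 + |x|)^{−(n+γ)} for all x ∈ ℝⁿ. -/
open MeasureTheory Metric Set

variable {n : ℕ}

local notation "E" => EuclideanSpace ℝ (Fin n)

/-- Hölder's inequality on a ball. -/
lemma holder_ball {q : ℝ} (hq1 : 1 < q) {V : E → ℝ} (hV0 : ∀ x, 0 ≤ V x)
    (hVmeas : Measurable V) {x : E} {s : ℝ} (hs : 0 < s)
    (hVq : IntegrableOn (fun y => V y ^ q) (ball x s)) :
    ∫ y in ball x s, V y ≤
      (∫ y in ball x s, V y ^ q) ^ (1 / q) * ((volume (ball x s)).toReal) ^ (1 - 1 / q) := by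
  set μ := (volume : Measure E).restrict (ball x s) with hμ
  haveI : IsFiniteMeasure μ := ⟨by
    rw [hμ, Measure.restrict_apply_univ]; exact measure_ball_lt_top⟩
  have hq0 : (0 : ℝ) < q := lt_trans one_pos hq1
  have hpq : q.HolderConjugate (q / (q - 1)) := Real.HolderConjugate.conjExponent hq1
  have hne0 : ENNReal.ofReal q ≠ 0 := by
    simp [ENNReal.ofReal_eq_zero, not_le, hq0]
  have hMem : MemLp V (ENNReal.ofReal q) μ := by
    apply (memLp_norm_rpow_iff (q := ENNReal.ofReal q) (p := ENNReal.ofReal q)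
      hVmeas.aestronglyMeasurable hne0 ENNReal.ofReal_ne_top).1
    rw [ENNReal.div_self hne0 ENNReal.ofReal_ne_top, ENNReal.toReal_ofReal hq0.le]
    rw [memLp_one_iff_integrable]
    apply hVq.congr_fun ?_ measurableSet_ball
    intro y _
    simp [Real.norm_of_nonneg (hV0 y)]
  have hMem1 : MemLp (fun _ : E => (1 : ℝ)) (ENNReal.ofReal (q / (q - 1))) μ :=
    memLp_const 1
  have key := integral_mul_le_Lp_mul_Lq_of_nonneg (μ := μ) hpq
    (Filter.Eventually.of_forall hV0) (Filter.Eventually.of_forall fun _ => zero_le_one)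
    hMem hMem1
  simp only [mul_one, Real.one_rpow] at key
  rw [integral_const, Measure.real, Measure.restrict_apply_univ, smul_eq_mul, mul_one] at key
  have hexp : 1 / (q / (q - 1)) = 1 - 1 / q := by
    field_simp
  rwa [hexp] at key

/-- `V` is integrable on balls. -/
lemma intV_ball {q : ℝ} (hq1 : 1 < q) {V : E → ℝ} (hV0 : ∀ x, 0 ≤ V x)
    (hVmeas : Measurable V) (x : E) {s : ℝ} (hs : 0 < s)
    (hVq : IntegrableOn (fun y => V y ^ q) (ball x s)) :
    IntegrableOn V (ball x s) := by
  haveI : IsFiniteMeasure ((volume : Measure E).restrict (ball x s)) := ⟨by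
    rw [Measure.restrict_apply_univ]; exact measure_ball_lt_top⟩
  have hbound : Integrable (fun y => 1 + V y ^ q) ((volume : Measure E).restrict (ball x s)) := by
    exact (integrable_const 1).add hVq
  apply Integrable.mono' hbound hVmeas.aestronglyMeasurable.restrict
  apply Filter.Eventually.of_forall
  intro y
  rw [Real.norm_of_nonneg (hV0 y)]
  rcases le_total (V y) 1 with h | h
  · have : (0:ℝ) ≤ V y ^ q := Real.rpow_nonneg (hV0 y) q
    linarith
  · have h2 : V y ^ (1:ℝ) ≤ V y ^ q := Real.rpow_le_rpow_of_exponent_le h (le_of_lt hq1)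
    rw [Real.rpow_one] at h2
    linarith

/-- Some ball around the origin carries positive mass of `V`. -/
lemma exists_ball_pos {q : ℝ} (hq1 : 1 < q) {V : E → ℝ} (hV0 : ∀ x, 0 ≤ V x)
    (hVmeas : Measurable V)
    (hVloc : ∀ (x : E) (r : ℝ), 0 < r → IntegrableOn (fun y => V y ^ q) (ball x r))
    (hVne : ¬ (V =ᵐ[volume] (0 : E → ℝ))) :
    ∃ s₀ : ℝ, 0 < s₀ ∧ 0 < ∫ y in ball (0 : E) s₀, V y := by
  by_contra hcon
  push_neg at hcon
  apply hVne
  have hzero : ∀ k : ℕ, ∀ᵐ y ∂((volume : Measure E).restrict (ball (0:E) (k+1))), V y = 0 := by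
    intro k
    have hk : (0:ℝ) < (k:ℝ) + 1 := by positivity
    have hint := intV_ball hq1 hV0 hVmeas (0:E) hk (hVloc _ _ hk)
    have h0 : ∫ y in ball (0:E) ((k:ℝ)+1), V y = 0 := by
      have h1 := hcon ((k:ℝ)+1) hk
      have h2 : 0 ≤ ∫ y in ball (0:E) ((k:ℝ)+1), V y :=
        integral_nonneg hV0
      linarith
    have := (integral_eq_zero_iff_of_nonneg hV0 hint).1 h0
    exact this
  have hae : ∀ᵐ y : E ∂volume, ∀ k : ℕ, y ∈ ball (0:E) ((k:ℝ)+1) → V y = 0 := by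
    rw [ae_all_iff]
    intro k
    exact (ae_restrict_iff' measurableSet_ball).1 (hzero k)
  filter_upwards [hae] with y hy
  obtain ⟨k, hk⟩ := exists_nat_gt ‖y‖
  have : y ∈ ball (0:E) ((k:ℝ)+1) := by
    rw [mem_ball, dist_zero_right]; linarith
  exact hy k this

lemma vol_ball_toReal (hn : 0 < n) (x : E) {s : ℝ} (hs : 0 ≤ s) :
    (volume (ball x s)).toReal = s ^ (n : ℝ) * (volume (ball (0:E) 1)).toReal := by
  haveI : Nonempty (Fin n) := ⟨⟨0, hn⟩⟩
  rw [Measure.addHaar_ball volume x hs, ENNReal.toReal_mul,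
    ENNReal.toReal_ofReal (pow_nonneg hs _), finrank_euclideanSpace_fin,
    Real.rpow_natCast]

lemma vol_ball_pos (x : E) {s : ℝ} (hs : 0 < s) : 0 < (volume (ball x s)).toReal :=
  ENNReal.toReal_pos (measure_ball_pos volume x hs).ne' measure_ball_lt_top.ne

lemma rho_bounds (hn : 3 ≤ n) {q : ℝ} (hq : (n : ℝ) / 2 < q) {V : E → ℝ}
    (hV0 : ∀ x, 0 ≤ V x) (hVmeas : Measurable V)
    (hVloc : ∀ (x : E) (r : ℝ), 0 < r → IntegrableOn (fun y => V y ^ q) (ball x r))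
    (hVne : ¬ (V =ᵐ[volume] (0 : E → ℝ)))
    {C_V : ℝ} (hCV : 0 < C_V)
    (hRH : ∀ (x : E) (r : ℝ), 0 < r →
      (((volume (ball x r)).toReal)⁻¹ * ∫ y in ball x r, V y ^ q) ^ (1 / q)
        ≤ C_V * (((volume (ball x r)).toReal)⁻¹ * ∫ y in ball x r, V y))
    (x₀ : E) (r : ℝ) (hr : 0 < r) :
    ∃ m M : ℝ, 0 < m ∧ 0 < M ∧
      ∀ y ∈ ball x₀ r, m ≤ rho n V y ∧ rho n V y ≤ M := by
  have hn0 : 0 < n := by omega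
  have hn3 : (3 : ℝ) ≤ (n : ℝ) := by exact_mod_cast hn
  have hq1 : 1 < q := by linarith
  have hq0 : (0 : ℝ) < q := by linarith
  set cn := (volume (ball (0:E) 1)).toReal with hcn_def
  have hcn : 0 < cn := vol_ball_pos (0:E) one_pos
  set β : ℝ := 1 - 1/q with hβ_def
  have hβ0 : 0 < β := by
    have : 1/q < 1 := by rw [div_lt_one hq0]; linarith
    simp only [hβ_def]; linarith
  set e : ℝ := 2 - (n:ℝ)/q with he_def
  have he : 0 < e := by
    have : (n:ℝ)/q < 2 := by rw [div_lt_iff₀ hq0]; linarith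
    simp only [he_def]; linarith
  obtain ⟨s₀, hs₀, hc₀⟩ := exists_ball_pos hq1 hV0 hVmeas hVloc hVne
  set c₀ := ∫ y in ball (0:E) s₀, V y with hc₀_def
  set s₁ := s₀ + ‖x₀‖ + r with hs₁_def
  have hs₁ : 0 < s₁ := by positivity
  set M₁ : ℝ := (C_V * s₁ ^ ((n:ℝ) * β) / c₀) ^ (1/e) with hM₁_def
  set M : ℝ := max s₁ M₁ with hM_def
  have hM0 : 0 < M := lt_of_lt_of_le hs₁ (le_max_left _ _)
  -- upper bound for all elements of rhoSet
  have hub : ∀ y ∈ ball x₀ r, ∀ R ∈ rhoSet n V y, R ≤ M := by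
    intro y hy R hR
    obtain ⟨hR0, hR2⟩ := hR
    rcases le_or_gt R s₁ with hRs | hRs
    · exact le_trans hRs (le_max_left _ _)
    have hsub : ball (0:E) s₀ ⊆ ball y s₁ := by
      intro z hz
      rw [mem_ball] at hz ⊢
      have t1 : dist z y ≤ dist z 0 + dist (0:E) y := dist_triangle _ _ _
      have t2 : dist (0:E) y ≤ dist (0:E) x₀ + dist x₀ y := dist_triangle _ _ _
      have t3 : dist (0:E) x₀ = ‖x₀‖ := by rw [dist_comm, dist_zero_right]
      have t4 : dist x₀ y < r := by rw [dist_comm]; exact hy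
      simp only [hs₁_def]
      linarith
    -- mass in ball y s₁
    have hints₁ : IntegrableOn V (ball y s₁) := intV_ball hq1 hV0 hVmeas y hs₁ (hVloc y s₁ hs₁)
    have h1 : c₀ ≤ ∫ y' in ball y s₁, V y' := by
      refine setIntegral_mono_set hints₁ (Filter.Eventually.of_forall hV0) hsub.eventuallyLE
    have h2 := holder_ball hq1 hV0 hVmeas hs₁ (hVloc y s₁ hs₁)
    set bR := ∫ y' in ball y R, V y' ^ q with hbR_def
    have hbs₁ : ∫ y' in ball y s₁, V y' ^ q ≤ bR := by
      refine setIntegral_mono_set (hVloc y R hR0)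
        (Filter.Eventually.of_forall fun z => Real.rpow_nonneg (hV0 z) q)
        (ball_subset_ball hRs.le).eventuallyLE
    have hbR0 : 0 ≤ bR :=
      setIntegral_nonneg measurableSet_ball fun z _ => Real.rpow_nonneg (hV0 z) q
    set aR := (volume (ball y R)).toReal with haR_def
    have haR : 0 < aR := vol_ball_pos y hR0
    set IR := ∫ y' in ball y R, V y' with hIR_def
    have hIR0 : 0 ≤ IR := setIntegral_nonneg measurableSet_ball fun z _ => hV0 z
    -- reverse Hölder at the big ball
    have hrh := hRH y R hR0
    have hbq : bR ^ (1/q) ≤ C_V * aR ^ (1/q) * aR⁻¹ * IR := by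
      have h4 : bR ^ (1/q) = aR ^ (1/q) * (aR⁻¹ * bR) ^ (1/q) := by
        rw [← Real.mul_rpow haR.le (by positivity), ← mul_assoc, mul_inv_cancel₀ haR.ne',
          one_mul]
      rw [h4]
      calc aR ^ (1/q) * (aR⁻¹ * bR) ^ (1/q) ≤ aR ^ (1/q) * (C_V * (aR⁻¹ * IR)) :=
            mul_le_mul_of_nonneg_left hrh (Real.rpow_nonneg haR.le _)
        _ = C_V * aR ^ (1/q) * aR⁻¹ * IR := by ring
    -- the rhoSet condition gives IR ≤ R ^ (n - 2)
    have hIR2 : IR ≤ R ^ ((n:ℝ) - 2) := by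
      have hprod : R ^ ((n:ℝ) - 2) * R ^ ((2:ℝ) - (n:ℝ)) = 1 := by
        rw [← Real.rpow_add hR0, show ((n:ℝ)-2)+((2:ℝ)-(n:ℝ)) = 0 by ring, Real.rpow_zero]
      calc IR = R ^ ((n:ℝ) - 2) * (R ^ ((2:ℝ) - (n:ℝ)) * IR) := by
            rw [← mul_assoc, hprod, one_mul]
        _ ≤ R ^ ((n:ℝ) - 2) * 1 :=
            mul_le_mul_of_nonneg_left hR2 (Real.rpow_nonneg hR0.le _)
        _ = R ^ ((n:ℝ) - 2) := mul_one _
    set vs₁ := (volume (ball y s₁)).toReal with hvs₁_def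
    have hvs₁ : 0 < vs₁ := vol_ball_pos y hs₁
    -- combine
    have key : c₀ ≤ C_V * aR ^ (1/q) * aR⁻¹ * R ^ ((n:ℝ) - 2) * vs₁ ^ β := by
      have hb1q : 0 ≤ bR ^ (1/q) := Real.rpow_nonneg hbR0 _
      calc c₀ ≤ ∫ y' in ball y s₁, V y' := h1
        _ ≤ (∫ y' in ball y s₁, V y' ^ q) ^ (1/q) * vs₁ ^ (1 - 1/q) := h2
        _ = (∫ y' in ball y s₁, V y' ^ q) ^ (1/q) * vs₁ ^ β := by rw [hβ_def]
        _ ≤ bR ^ (1/q) * vs₁ ^ β := by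
            apply mul_le_mul_of_nonneg_right _ (Real.rpow_nonneg hvs₁.le _)
            exact Real.rpow_le_rpow (setIntegral_nonneg measurableSet_ball
              fun z _ => Real.rpow_nonneg (hV0 z) q) hbs₁ (by positivity)
        _ ≤ (C_V * aR ^ (1/q) * aR⁻¹ * IR) * vs₁ ^ β :=
            mul_le_mul_of_nonneg_right hbq (Real.rpow_nonneg hvs₁.le _)
        _ ≤ (C_V * aR ^ (1/q) * aR⁻¹ * R ^ ((n:ℝ) - 2)) * vs₁ ^ β := by
            apply mul_le_mul_of_nonneg_right _ (Real.rpow_nonneg hvs₁.le _)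
            apply mul_le_mul_of_nonneg_left hIR2
            positivity
    -- rewrite the volumes
    have haRval : aR = R ^ (n:ℝ) * cn := by rw [haR_def, vol_ball_toReal hn0 y hR0.le]
    have hvs₁val : vs₁ = s₁ ^ (n:ℝ) * cn := by rw [hvs₁_def, vol_ball_toReal hn0 y hs₁.le]
    have key2 : c₀ ≤ C_V * s₁ ^ ((n:ℝ) * β) * R ^ (-e) := by
      have e1 : aR ^ (1/q) * aR⁻¹ = aR ^ (-β) := by
        rw [← Real.rpow_neg_one aR, ← Real.rpow_add haR]
        congr 1
        simp only [hβ_def]; ring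
      have e2 : aR ^ (-β) = R ^ (-((n:ℝ) * β)) * cn ^ (-β) := by
        rw [haRval, Real.mul_rpow (Real.rpow_nonneg hR0.le _) hcn.le,
          ← Real.rpow_mul hR0.le]
        congr 2
        ring
      have e3 : vs₁ ^ β = s₁ ^ ((n:ℝ) * β) * cn ^ β := by
        rw [hvs₁val, Real.mul_rpow (Real.rpow_nonneg hs₁.le _) hcn.le,
          ← Real.rpow_mul hs₁.le]
        
      have e4 : cn ^ (-β) * cn ^ β = 1 := by
        rw [← Real.rpow_add hcn, neg_add_cancel, Real.rpow_zero]
      have e5 : R ^ (-((n:ℝ) * β)) * R ^ ((n:ℝ) - 2) = R ^ (-e) := by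
        rw [← Real.rpow_add hR0]
        congr 1
        simp only [he_def, hβ_def]
        field_simp
        ring
      calc c₀ ≤ C_V * aR ^ (1/q) * aR⁻¹ * R ^ ((n:ℝ) - 2) * vs₁ ^ β := key
        _ = C_V * (aR ^ (1/q) * aR⁻¹) * R ^ ((n:ℝ) - 2) * vs₁ ^ β := by ring
        _ = C_V * (R ^ (-((n:ℝ)*β)) * cn ^ (-β)) * R ^ ((n:ℝ) - 2) *
              (s₁ ^ ((n:ℝ) * β) * cn ^ β) := by rw [e1, e2, e3]
        _ = C_V * s₁ ^ ((n:ℝ) * β) * (R ^ (-((n:ℝ)*β)) * R ^ ((n:ℝ) - 2)) *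
              (cn ^ (-β) * cn ^ β) := by ring
        _ = C_V * s₁ ^ ((n:ℝ) * β) * R ^ (-e) := by rw [e4, e5, mul_one]
    -- conclude R ≤ M₁
    have hRe : R ^ e ≤ C_V * s₁ ^ ((n:ℝ) * β) / c₀ := by
      rw [le_div_iff₀ hc₀]
      have hmul := mul_le_mul_of_nonneg_left key2 (Real.rpow_nonneg hR0.le e)
      have hRee : R ^ e * R ^ (-e) = 1 := by
        rw [← Real.rpow_add hR0, add_neg_cancel, Real.rpow_zero]
      calc R ^ e * c₀ ≤ R ^ e * (C_V * s₁ ^ ((n:ℝ) * β) * R ^ (-e)) := hmul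
        _ = (R ^ e * R ^ (-e)) * (C_V * s₁ ^ ((n:ℝ) * β)) := by ring
        _ = C_V * s₁ ^ ((n:ℝ) * β) := by rw [hRee, one_mul]
    have : R ≤ M₁ := by
      have h6 : (R ^ e) ^ (1/e) ≤ (C_V * s₁ ^ ((n:ℝ) * β) / c₀) ^ (1/e) :=
        Real.rpow_le_rpow (Real.rpow_nonneg hR0.le e) hRe (by positivity)
      rwa [← Real.rpow_mul hR0.le, mul_one_div, div_self he.ne', Real.rpow_one] at h6
    exact le_trans this (le_max_right _ _)
  -- lower bound: a uniform element of rhoSet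
  set A : ℝ := (∫ y in ball x₀ (r+1), V y ^ q) ^ (1/q) with hA_def
  have hA0 : 0 ≤ A := Real.rpow_nonneg
    (setIntegral_nonneg measurableSet_ball fun z _ => Real.rpow_nonneg (hV0 z) q) _
  set B : ℝ := A * cn ^ β + 1 with hB_def
  have hB : 0 < B := by
    have : 0 ≤ A * cn ^ β := mul_nonneg hA0 (Real.rpow_nonneg hcn.le _)
    simp only [hB_def]; linarith
  set m : ℝ := min 1 (B ^ (-(1/e))) with hm_def
  have hm0 : 0 < m := lt_min one_pos (Real.rpow_pos_of_pos hB _)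
  have hm1 : m ≤ 1 := min_le_left _ _
  have hmem : ∀ y ∈ ball x₀ r, m ∈ rhoSet n V y := by
    intro y hy
    refine ⟨hm0, ?_⟩
    have hsub : ball y m ⊆ ball x₀ (r+1) := by
      intro z hz
      rw [mem_ball] at hz hy ⊢
      have := dist_triangle z y x₀
      linarith
    have hint1 : (∫ y' in ball y m, V y' ^ q) ^ (1/q) ≤ A := by
      apply Real.rpow_le_rpow (setIntegral_nonneg measurableSet_ball
        fun z _ => Real.rpow_nonneg (hV0 z) q) _ (by positivity)
      exact setIntegral_mono_set (hVloc x₀ (r+1) (by linarith))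
        (Filter.Eventually.of_forall fun z => Real.rpow_nonneg (hV0 z) q)
        hsub.eventuallyLE
    have hh := holder_ball hq1 hV0 hVmeas hm0 (hVloc y m hm0)
    have hvol : ((volume (ball y m)).toReal) ^ (1 - 1/q) = m ^ ((n:ℝ) * β) * cn ^ β := by
      rw [vol_ball_toReal hn0 y hm0.le, ← hβ_def,
        Real.mul_rpow (Real.rpow_nonneg hm0.le _) hcn.le, ← Real.rpow_mul hm0.le]
    have hIm : ∫ y' in ball y m, V y' ≤ A * (m ^ ((n:ℝ) * β) * cn ^ β) := by
      calc ∫ y' in ball y m, V y'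
          ≤ (∫ y' in ball y m, V y' ^ q) ^ (1/q) * ((volume (ball y m)).toReal) ^ (1 - 1/q) := hh
        _ ≤ A * ((volume (ball y m)).toReal) ^ (1 - 1/q) :=
            mul_le_mul_of_nonneg_right hint1 (Real.rpow_nonneg ENNReal.toReal_nonneg _)
        _ = A * (m ^ ((n:ℝ) * β) * cn ^ β) := by rw [hvol]
    have hme : m ^ e ≤ B⁻¹ := by
      have h7 : m ^ e ≤ (B ^ (-(1/e))) ^ e :=
        Real.rpow_le_rpow hm0.le (min_le_right _ _) he.le
      have h8 : (B ^ (-(1/e))) ^ e = B⁻¹ := by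
        rw [← Real.rpow_mul hB.le, show -(1/e) * e = -1 by field_simp,
          Real.rpow_neg_one]
      rw [← h8]; exact h7
    have hexp : m ^ ((2:ℝ) - (n:ℝ)) * m ^ ((n:ℝ) * β) = m ^ e := by
      rw [← Real.rpow_add hm0]
      congr 1
      simp only [he_def, hβ_def]
      field_simp
      ring
    calc m ^ ((2:ℝ) - (n:ℝ)) * ∫ y' in ball y m, V y'
        ≤ m ^ ((2:ℝ) - (n:ℝ)) * (A * (m ^ ((n:ℝ) * β) * cn ^ β)) :=
          mul_le_mul_of_nonneg_left hIm (Real.rpow_nonneg hm0.le _)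
      _ = (A * cn ^ β) * (m ^ ((2:ℝ) - (n:ℝ)) * m ^ ((n:ℝ) * β)) := by ring
      _ = (A * cn ^ β) * m ^ e := by rw [hexp]
      _ ≤ B * B⁻¹ := by
          apply mul_le_mul _ hme (Real.rpow_nonneg hm0.le _) hB.le
          simp only [hB_def]; linarith
      _ = 1 := mul_inv_cancel₀ hB.ne'
  refine ⟨m, M, hm0, hM0, fun y hy => ⟨?_, ?_⟩⟩
  · exact le_csSup ⟨M, fun R hR => hub y hy R hR⟩ (hmem y hy)
  · exact csSup_le ⟨m, hmem y hy⟩ (fun R hR => hub y hy R hR)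

lemma profile_integral (hn0 : 0 < n) {γ : ℝ} (hγ : 0 < γ) (x : E) {t : ℝ} (ht : 0 < t) :
    Integrable (fun y : E => t ^ (-(n:ℝ)) * (1 + dist x y / t) ^ (-((n:ℝ)+γ))) ∧
    ∫ y : E, t ^ (-(n:ℝ)) * (1 + dist x y / t) ^ (-((n:ℝ)+γ)) =
      ∫ u : E, (1+‖u‖) ^ (-((n:ℝ)+γ)) := by
  set h : E → ℝ := fun u => (1+‖u‖) ^ (-((n:ℝ)+γ)) with hh_def
  have hfr : ((Module.finrank ℝ E : ℝ)) < (n:ℝ) + γ := by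
    rw [finrank_euclideanSpace_fin]; linarith
  have hInt : Integrable h := integrable_one_add_norm (μ := (volume : Measure E)) hfr
  have hrw : ∀ y : E, (1 + dist x y / t) ^ (-((n:ℝ)+γ)) = h (t⁻¹ • (y - x)) := by
    intro y
    have : ‖t⁻¹ • (y - x)‖ = dist x y / t := by
      rw [norm_smul, Real.norm_eq_abs, abs_of_pos (inv_pos.2 ht), ← dist_eq_norm,
        dist_comm, div_eq_inv_mul]
    rw [hh_def]; simp only [this]
  have hi2 : Integrable (fun y : E => h (t⁻¹ • (y - x))) := by
    exact Integrable.comp_sub_right (hInt.comp_smul (inv_ne_zero ht.ne')) x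
  constructor
  · apply Integrable.const_mul
    exact hi2.congr (Filter.Eventually.of_forall fun y => (hrw y).symm)
  · have h1 : ∫ y : E, t ^ (-(n:ℝ)) * (1 + dist x y / t) ^ (-((n:ℝ)+γ)) =
        t ^ (-(n:ℝ)) * ∫ y : E, h (t⁻¹ • (y - x)) := by
      rw [← integral_const_mul]
      congr 1; ext y; rw [hrw y]
    rw [h1, integral_sub_right_eq_self (fun z : E => h (t⁻¹ • z)) x,
      Measure.integral_comp_smul volume h t⁻¹, finrank_euclideanSpace_fin]
    rw [smul_eq_mul, ← mul_assoc]
    have habs : |((t⁻¹ : ℝ) ^ n)⁻¹| = t ^ ((n:ℝ)) := by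
      rw [abs_of_pos (by positivity), inv_pow, inv_inv, ← Real.rpow_natCast t n]
    have hone : t ^ (-(n:ℝ)) * t ^ ((n:ℝ)) = 1 := by
      rw [← Real.rpow_add ht, neg_add_cancel, Real.rpow_zero]
    rw [habs, hone, one_mul]

theorem stmt_12 (n : ℕ) (hn : 3 ≤ n) (q : ℝ) (hq : (n : ℝ) / 2 < q)
    (V : EuclideanSpace ℝ (Fin n) → ℝ) (hV0 : ∀ x, 0 ≤ V x) (hVmeas : Measurable V)
    (hVloc : ∀ (x : EuclideanSpace ℝ (Fin n)) (r : ℝ), 0 < r →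
      IntegrableOn (fun y => V y ^ q) (ball x r))
    (hVne : ¬ (V =ᵐ[volume] (0 : EuclideanSpace ℝ (Fin n) → ℝ)))
    (C_V : ℝ) (hCV : 0 < C_V)
    (hRH : ∀ (x : EuclideanSpace ℝ (Fin n)) (r : ℝ), 0 < r →
      (((volume (ball x r)).toReal)⁻¹ * ∫ y in ball x r, V y ^ q) ^ (1 / q)
        ≤ C_V * (((volume (ball x r)).toReal)⁻¹ * ∫ y in ball x r, V y))
    (α γ : ℝ) (hα0 : 0 < α) (hα1 : α ≤ 1) (hγ : α ≤ γ)
    (Q : ℝ → EuclideanSpace ℝ (Fin n) → EuclideanSpace ℝ (Fin n) → ℝ)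
    (hQmeas : Measurable fun p : ℝ × EuclideanSpace ℝ (Fin n) × EuclideanSpace ℝ (Fin n) =>
      Q p.1 p.2.1 p.2.2)
    (hQ : ∀ N > (0 : ℝ), ∃ C_N > (0 : ℝ),
      ∀ (t : ℝ) (x y : EuclideanSpace ℝ (Fin n)), 0 < t →
        |Q t x y| ≤ C_N * (1 + t / rho n V x + t / rho n V y) ^ (-N) * t ^ (-(n : ℝ)) *
          (1 + dist x y / t) ^ (-((n : ℝ) + γ)))
    (x₀ : EuclideanSpace ℝ (Fin n)) (r : ℝ) (hr : 0 < r) (hrρ : r ≤ rho n V x₀)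
    (g : EuclideanSpace ℝ (Fin n) → ℝ) (hgmeas : Measurable g)
    (hgsupp : Function.support g ⊆ ball x₀ r)
    (hgbound : ∀ y, |g y| ≤ (volume (ball x₀ r)).toReal ^ (-((n : ℝ) + α) / n))
    (hgcancel : r < rho n V x₀ / 4 → ∫ y, g y = 0) :
    ∃ C > (0 : ℝ), ∀ (x : EuclideanSpace ℝ (Fin n)) (t : ℝ), 0 < t →
      |∫ y, Q t x y * g y| ≤ C * (1 + ‖x‖) ^ (-((n : ℝ) + γ)) := by
  have hn0 : 0 < n := by omega
  have hγ0 : 0 < γ := lt_of_lt_of_le hα0 hγ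
  have hρ0 : ∀ z : EuclideanSpace ℝ (Fin n), 0 ≤ rho n V z := fun z =>
    Real.sSup_nonneg (fun R hR => hR.1.le)
  obtain ⟨m, M, hm0, hM0, hmM⟩ := rho_bounds hn hq hV0 hVmeas hVloc hVne hCV hRH x₀ r hr
  obtain ⟨CN, hCN, hQb⟩ := hQ ((n:ℝ) + γ) (by positivity)
  set G := (volume (ball x₀ r)).toReal ^ (-((n : ℝ) + α) / n) with hG_def
  have hG0 : 0 < G := Real.rpow_pos_of_pos (vol_ball_pos x₀ hr) _
  set c := ∫ u : EuclideanSpace ℝ (Fin n), (1 + ‖u‖) ^ (-((n:ℝ) + γ)) with hc_def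
  have hc0 : 0 ≤ c := integral_nonneg (fun u => Real.rpow_nonneg (by positivity) _)
  set R₀ : ℝ := 2 * ‖x₀‖ + 2 * r + 2 with hR₀_def
  have hR₀0 : 0 < R₀ := by positivity
  set C₁ : ℝ := CN * G * c * (1 + R₀) ^ ((n:ℝ) + γ) with hC₁_def
  set C₂ : ℝ := CN * M ^ γ * 2 ^ ((n:ℝ) + γ) * G * (volume (ball x₀ r)).toReal with hC₂_def
  have hC₁0 : 0 ≤ C₁ := by
    apply mul_nonneg (mul_nonneg (mul_nonneg hCN.le hG0.le) hc0) (Real.rpow_nonneg _ _)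
    positivity
  have hC₂0 : 0 ≤ C₂ := by
    apply mul_nonneg (mul_nonneg (mul_nonneg (mul_nonneg hCN.le
      (Real.rpow_nonneg hM0.le _)) (Real.rpow_nonneg (by norm_num) _)) hG0.le)
      ENNReal.toReal_nonneg
  refine ⟨C₁ + C₂ + 1, by linarith, ?_⟩
  intro x t ht
  have hx1 : (0:ℝ) < 1 + ‖x‖ := by positivity
  have hxpow : 0 ≤ (1 + ‖x‖) ^ (-((n:ℝ) + γ)) := Real.rpow_nonneg hx1.le _
  have habs_eq : |∫ y, Q t x y * g y| = ‖∫ y, Q t x y * g y‖ := (Real.norm_eq_abs _).symm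
  have hGy : ∀ y, |g y| ≤ G := hgbound
  rcases le_or_gt ‖x‖ R₀ with hxR | hxR
  · -- near regime
    obtain ⟨hφint, hφval⟩ := profile_integral hn0 hγ0 x ht
    have hnear : ∀ y, ‖Q t x y * g y‖ ≤
        (CN * G) * (t ^ (-(n:ℝ)) * (1 + dist x y / t) ^ (-((n:ℝ) + γ))) := by
      intro y
      rw [norm_mul, Real.norm_eq_abs, Real.norm_eq_abs]
      have hfac : (1 + t / rho n V x + t / rho n V y) ^ (-((n:ℝ) + γ)) ≤ 1 := by
        apply Real.rpow_le_one_of_one_le_of_nonpos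
        · have h1 : 0 ≤ t / rho n V x := div_nonneg ht.le (hρ0 x)
          have h2 : 0 ≤ t / rho n V y := div_nonneg ht.le (hρ0 y)
          linarith
        · have : (0:ℝ) ≤ (n:ℝ) + γ := by positivity
          linarith
      have hQ1 : |Q t x y| ≤ CN * (t ^ (-(n:ℝ)) * (1 + dist x y / t) ^ (-((n:ℝ) + γ))) := by
        have hprof : 0 ≤ t ^ (-(n:ℝ)) * (1 + dist x y / t) ^ (-((n:ℝ) + γ)) := by
          apply mul_nonneg (Real.rpow_nonneg ht.le _) (Real.rpow_nonneg _ _)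
          have := dist_nonneg (x := x) (y := y)
          positivity
        calc |Q t x y| ≤ CN * (1 + t / rho n V x + t / rho n V y) ^ (-((n:ℝ) + γ)) *
              t ^ (-(n:ℝ)) * (1 + dist x y / t) ^ (-((n:ℝ) + γ)) := hQb t x y ht
          _ = (1 + t / rho n V x + t / rho n V y) ^ (-((n:ℝ) + γ)) *
              (CN * (t ^ (-(n:ℝ)) * (1 + dist x y / t) ^ (-((n:ℝ) + γ)))) := by ring
          _ ≤ 1 * (CN * (t ^ (-(n:ℝ)) * (1 + dist x y / t) ^ (-((n:ℝ) + γ)))) :=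
              mul_le_mul_of_nonneg_right hfac (by positivity)
          _ = CN * (t ^ (-(n:ℝ)) * (1 + dist x y / t) ^ (-((n:ℝ) + γ))) := one_mul _
      calc |Q t x y| * |g y|
          ≤ (CN * (t ^ (-(n:ℝ)) * (1 + dist x y / t) ^ (-((n:ℝ) + γ)))) * G :=
            mul_le_mul hQ1 (hGy y) (abs_nonneg _) (by positivity)
        _ = (CN * G) * (t ^ (-(n:ℝ)) * (1 + dist x y / t) ^ (-((n:ℝ) + γ))) := by ring
    have hint2 : Integrable (fun y : EuclideanSpace ℝ (Fin n) =>
        (CN * G) * (t ^ (-(n:ℝ)) * (1 + dist x y / t) ^ (-((n:ℝ) + γ)))) :=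
      hφint.const_mul _
    have hbound2 : |∫ y, Q t x y * g y| ≤ CN * G * c := by
      rw [habs_eq]
      calc ‖∫ y, Q t x y * g y‖ ≤ ∫ y, ‖Q t x y * g y‖ := norm_integral_le_integral_norm _
        _ ≤ ∫ y, (CN * G) * (t ^ (-(n:ℝ)) * (1 + dist x y / t) ^ (-((n:ℝ) + γ))) :=
            integral_mono_of_nonneg (Filter.Eventually.of_forall fun y => norm_nonneg _)
              hint2 (Filter.Eventually.of_forall hnear)
        _ = (CN * G) * ∫ y, t ^ (-(n:ℝ)) * (1 + dist x y / t) ^ (-((n:ℝ) + γ)) :=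
            integral_const_mul _ _
        _ = CN * G * c := by rw [hφval]
    have hone : (1 + R₀) ^ ((n:ℝ) + γ) * (1 + R₀) ^ (-((n:ℝ) + γ)) = 1 := by
      rw [← Real.rpow_add (by positivity), add_neg_cancel, Real.rpow_zero]
    have h15 : (1 + R₀) ^ (-((n:ℝ) + γ)) ≤ (1 + ‖x‖) ^ (-((n:ℝ) + γ)) := by
      apply Real.rpow_le_rpow_of_nonpos hx1 (by linarith)
      have : (0:ℝ) ≤ (n:ℝ) + γ := by positivity
      linarith
    calc |∫ y, Q t x y * g y| ≤ CN * G * c := hbound2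
      _ = C₁ * (1 + R₀) ^ (-((n:ℝ) + γ)) := by
          rw [hC₁_def, mul_assoc (CN * G * c), hone, mul_one]
      _ ≤ C₁ * (1 + ‖x‖) ^ (-((n:ℝ) + γ)) := mul_le_mul_of_nonneg_left h15 hC₁0
      _ ≤ (C₁ + C₂ + 1) * (1 + ‖x‖) ^ (-((n:ℝ) + γ)) :=
          mul_le_mul_of_nonneg_right (by linarith) hxpow
  · -- far regime
    set D : ℝ := CN * M ^ γ * (2 ^ ((n:ℝ) + γ) * (1 + ‖x‖) ^ (-((n:ℝ) + γ))) * G with hD_def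
    have hD0 : 0 ≤ D := by
      apply mul_nonneg (mul_nonneg (mul_nonneg hCN.le (Real.rpow_nonneg hM0.le _)) _) hG0.le
      exact mul_nonneg (Real.rpow_nonneg (by norm_num) _) hxpow
    have hfar : ∀ y, ‖Q t x y * g y‖ ≤ (ball x₀ r).indicator (fun _ => D) y := by
      intro y
      rw [norm_mul, Real.norm_eq_abs, Real.norm_eq_abs]
      by_cases hy : y ∈ ball x₀ r
      · rw [indicator_of_mem hy]
        obtain ⟨hmy, hMy⟩ := hmM y hy
        have hρy : 0 < rho n V y := lt_of_lt_of_le hm0 hmy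
        have hdist0 : 0 ≤ dist x y := dist_nonneg
        have hny : ‖y‖ < r + ‖x₀‖ := by
          have h1 : ‖y‖ ≤ ‖x₀‖ + ‖y - x₀‖ := norm_le_norm_add_norm_sub' y x₀
          have h2 : ‖y - x₀‖ < r := by rw [← dist_eq_norm]; exact mem_ball.1 hy
          linarith
        have hd : (1 + ‖x‖) / 2 ≤ dist x y := by
          have h1 : ‖x‖ - ‖y‖ ≤ ‖x - y‖ := norm_sub_norm_le x y
          rw [dist_eq_norm]
          simp only [hR₀_def] at hxR
          linarith
        have hd0 : 0 < dist x y := lt_of_lt_of_le (by positivity) hd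
        have hdt : (0:ℝ) < t + dist x y := by positivity
        have hbase : (0:ℝ) < 1 + t / M := by positivity
        -- step 1 : use rho lower bound
        have step1 : (1 + t / rho n V x + t / rho n V y) ^ (-((n:ℝ) + γ)) ≤
            (1 + t / M) ^ (-((n:ℝ) + γ)) := by
          apply Real.rpow_le_rpow_of_nonpos hbase
          · have h1 : 0 ≤ t / rho n V x := div_nonneg ht.le (hρ0 x)
            have h2 : t / M ≤ t / rho n V y := by
              apply div_le_div_of_nonneg_left ht.le hρy hMy
            linarith
          · have : (0:ℝ) ≤ (n:ℝ) + γ := by positivity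
            linarith
        -- step 2 : rewrite the kernel profile
        have ht1 : t ^ (-((n:ℝ))) / t ^ (-((n:ℝ) + γ)) = t ^ γ := by
          rw [← Real.rpow_sub ht]; congr 1; ring
        have step2 : t ^ (-((n:ℝ))) * (1 + dist x y / t) ^ (-((n:ℝ) + γ)) =
            t ^ γ * (t + dist x y) ^ (-((n:ℝ) + γ)) := by
          rw [show (1 + dist x y / t) = (t + dist x y) / t by field_simp,
            Real.div_rpow hdt.le ht.le]
          calc t ^ (-((n:ℝ))) * ((t + dist x y) ^ (-((n:ℝ) + γ)) / t ^ (-((n:ℝ) + γ)))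
              = (t ^ (-((n:ℝ))) / t ^ (-((n:ℝ) + γ))) * (t + dist x y) ^ (-((n:ℝ) + γ)) := by
                ring
            _ = t ^ γ * (t + dist x y) ^ (-((n:ℝ) + γ)) := by rw [ht1]
        -- step 3 : time decay beats t^γ
        have step3 : (1 + t / M) ^ (-((n:ℝ) + γ)) * t ^ γ ≤ M ^ γ := by
          have h9 : (1 + t / M) ^ (-((n:ℝ) + γ)) ≤ (1 + t / M) ^ (-γ) := by
            apply Real.rpow_le_rpow_of_exponent_le
            · have : 0 ≤ t / M := div_nonneg ht.le hM0.le
              linarith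
            · have : (0:ℝ) ≤ (n:ℝ) := by positivity
              linarith
          have h10 : (1 + t / M) ^ (-γ) * t ^ γ ≤ M ^ γ := by
            rw [Real.rpow_neg hbase.le, inv_mul_eq_div, ← Real.div_rpow ht.le hbase.le]
            apply Real.rpow_le_rpow (by positivity) _ hγ0.le
            rw [div_le_iff₀ hbase]
            have : M * (1 + t / M) = M + t := by field_simp
            linarith [this]
          calc (1 + t / M) ^ (-((n:ℝ) + γ)) * t ^ γ
              ≤ (1 + t / M) ^ (-γ) * t ^ γ :=
                mul_le_mul_of_nonneg_right h9 (Real.rpow_nonneg ht.le _)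
            _ ≤ M ^ γ := h10
        -- step 4 : spatial decay
        have h11 : (t + dist x y) ^ (-((n:ℝ) + γ)) ≤ (dist x y) ^ (-((n:ℝ) + γ)) := by
          apply Real.rpow_le_rpow_of_nonpos hd0 (by linarith)
          have : (0:ℝ) ≤ (n:ℝ) + γ := by positivity
          linarith
        have h12 : (dist x y) ^ (-((n:ℝ) + γ)) ≤ ((1 + ‖x‖) / 2) ^ (-((n:ℝ) + γ)) := by
          apply Real.rpow_le_rpow_of_nonpos (by positivity) hd
          have : (0:ℝ) ≤ (n:ℝ) + γ := by positivity
          linarith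
        have h13 : ((1 + ‖x‖) / 2) ^ (-((n:ℝ) + γ)) =
            2 ^ ((n:ℝ) + γ) * (1 + ‖x‖) ^ (-((n:ℝ) + γ)) := by
          rw [Real.div_rpow hx1.le (by norm_num : (0:ℝ) ≤ 2),
            Real.rpow_neg (by norm_num : (0:ℝ) ≤ 2), div_eq_mul_inv, inv_inv, mul_comm]

        have hQ2 : |Q t x y| ≤ CN * M ^ γ * (2 ^ ((n:ℝ) + γ) * (1 + ‖x‖) ^ (-((n:ℝ) + γ))) := by
          calc |Q t x y| ≤ CN * (1 + t / rho n V x + t / rho n V y) ^ (-((n:ℝ) + γ)) *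
                t ^ (-(n:ℝ)) * (1 + dist x y / t) ^ (-((n:ℝ) + γ)) := hQb t x y ht
            _ = CN * ((1 + t / rho n V x + t / rho n V y) ^ (-((n:ℝ) + γ)) *
                (t ^ (-(n:ℝ)) * (1 + dist x y / t) ^ (-((n:ℝ) + γ)))) := by ring
            _ = CN * ((1 + t / rho n V x + t / rho n V y) ^ (-((n:ℝ) + γ)) *
                (t ^ γ * (t + dist x y) ^ (-((n:ℝ) + γ)))) := by rw [step2]
            _ ≤ CN * ((1 + t / M) ^ (-((n:ℝ) + γ)) *
                (t ^ γ * (t + dist x y) ^ (-((n:ℝ) + γ)))) := by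
                apply mul_le_mul_of_nonneg_left _ hCN.le
                apply mul_le_mul_of_nonneg_right step1
                exact mul_nonneg (Real.rpow_nonneg ht.le _) (Real.rpow_nonneg hdt.le _)
            _ = CN * (((1 + t / M) ^ (-((n:ℝ) + γ)) * t ^ γ) *
                (t + dist x y) ^ (-((n:ℝ) + γ))) := by ring
            _ ≤ CN * (M ^ γ * (t + dist x y) ^ (-((n:ℝ) + γ))) := by
                apply mul_le_mul_of_nonneg_left _ hCN.le
                exact mul_le_mul_of_nonneg_right step3 (Real.rpow_nonneg hdt.le _)
            _ ≤ CN * (M ^ γ * ((1 + ‖x‖) / 2) ^ (-((n:ℝ) + γ))) := by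
                apply mul_le_mul_of_nonneg_left _ hCN.le
                exact mul_le_mul_of_nonneg_left (h11.trans h12) (Real.rpow_nonneg hM0.le _)
            _ = CN * M ^ γ * (2 ^ ((n:ℝ) + γ) * (1 + ‖x‖) ^ (-((n:ℝ) + γ))) := by
                rw [h13]; ring
        calc |Q t x y| * |g y|
            ≤ (CN * M ^ γ * (2 ^ ((n:ℝ) + γ) * (1 + ‖x‖) ^ (-((n:ℝ) + γ)))) * G :=
              mul_le_mul hQ2 (hGy y) (abs_nonneg _) (by
                apply mul_nonneg (mul_nonneg hCN.le (Real.rpow_nonneg hM0.le _))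
                exact mul_nonneg (Real.rpow_nonneg (by norm_num) _) hxpow)
          _ = D := by rw [hD_def]
      · rw [indicator_of_notMem hy]
        have hgy : g y = 0 := by
          by_contra hne
          exact hy (hgsupp (Function.mem_support.2 hne))
        rw [hgy, abs_zero, mul_zero]
    have hindint : Integrable ((ball x₀ r).indicator (fun _ => D))
        (volume : Measure (EuclideanSpace ℝ (Fin n))) := by
      rw [integrable_indicator_iff measurableSet_ball]
      exact integrableOn_const measure_ball_lt_top.ne
    calc |∫ y, Q t x y * g y| = ‖∫ y, Q t x y * g y‖ := habs_eq
      _ ≤ ∫ y, ‖Q t x y * g y‖ := norm_integral_le_integral_norm _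
      _ ≤ ∫ y, (ball x₀ r).indicator (fun _ => D) y :=
          integral_mono_of_nonneg (Filter.Eventually.of_forall fun y => norm_nonneg _)
            hindint (Filter.Eventually.of_forall hfar)
      _ = (volume (ball x₀ r)).toReal * D := by
          rw [integral_indicator_const _ measurableSet_ball, Measure.real, smul_eq_mul]
      _ = C₂ * (1 + ‖x‖) ^ (-((n:ℝ) + γ)) := by rw [hC₂_def, hD_def]; ring
      _ ≤ (C₁ + C₂ + 1) * (1 + ‖x‖) ^ (-((n:ℝ) + γ)) :=
          mul_le_mul_of_nonneg_right (by linarith) hxpow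
end

section
/- Let n ≥ 1, ρ : ℝⁿ → (0,∞) be any function, 0 < α < 1, β > α and α < δ′ < β. Let K_t(x,z) (t > 0, x, z ∈ ℝⁿ) be a measurable family of kernels satisfying |K_t(x,z)| ≤ C₀ t^β (t + |x−z|)^{−(n+β)} for all t, x, z, and |∫_{ℝⁿ} K_t(x,z) dz| ≤ C₀ (t/ρ(x))^{δ′} for all t, x. Let f : ℝⁿ → ℝ satisfy |f(x)−f(z)| ≤ A|x−z|^α for all x, z and |f(x)| ≤ A ρ(x)^α for all x. Then there exists a constant C (depending only on n, α, β, δ′, C₀) such that |∫_{ℝⁿ} K_t(x,z) f(z) dz| ≤ C A t^α for all x ∈ ℝⁿ and t > 0. -/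
open MeasureTheory Metric Set

section AuxStmt13

open Real Module

private lemma aux_integrable (n : ℕ) {γ β : ℝ} (hγ : 0 ≤ γ) (hβ : γ < β) :
    Integrable (fun u : EuclideanSpace ℝ (Fin n) => ‖u‖ ^ γ * (1 + ‖u‖) ^ (-((n : ℝ) + β))) := by
  have hint : Integrable (fun u : EuclideanSpace ℝ (Fin n) => (1 + ‖u‖) ^ (-((n : ℝ) + β - γ))) :=
    integrable_one_add_norm (by rw [finrank_euclideanSpace_fin]; linarith)
  refine hint.mono' (Measurable.aestronglyMeasurable (by fun_prop)) (ae_of_all _ fun u => ?_)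
  have h1 : (0:ℝ) < 1 + ‖u‖ := by positivity
  have h2 : ‖u‖ ^ γ ≤ (1 + ‖u‖) ^ γ := rpow_le_rpow (norm_nonneg u) (by linarith) hγ
  have h3 : (0:ℝ) ≤ (1 + ‖u‖) ^ (-((n : ℝ) + β)) := rpow_nonneg h1.le _
  rw [Real.norm_eq_abs, abs_of_nonneg (by positivity)]
  calc ‖u‖ ^ γ * (1 + ‖u‖) ^ (-((n : ℝ) + β)) ≤ (1 + ‖u‖) ^ γ * (1 + ‖u‖) ^ (-((n : ℝ) + β)) :=
      mul_le_mul_of_nonneg_right h2 h3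
    _ = (1 + ‖u‖) ^ (-((n : ℝ) + β - γ)) := by
      rw [← Real.rpow_add h1]; ring_nf

private lemma aux_integrable_t (n : ℕ) {γ β t : ℝ} (hγ : 0 ≤ γ) (hβ : γ < β) (ht : 0 < t) :
    Integrable (fun z : EuclideanSpace ℝ (Fin n) => ‖z‖ ^ γ * (t + ‖z‖) ^ (-((n : ℝ) + β))) := by
  set m : ℝ := min t 1 with hm
  have hm0 : 0 < m := lt_min ht one_pos
  have hint : Integrable (fun u : EuclideanSpace ℝ (Fin n) =>
      m ^ (-((n : ℝ) + β)) * (1 + ‖u‖) ^ (-((n : ℝ) + β - γ))) :=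
    (integrable_one_add_norm (by rw [finrank_euclideanSpace_fin]; linarith)).const_mul _
  refine hint.mono' (Measurable.aestronglyMeasurable (by fun_prop)) (ae_of_all _ fun u => ?_)
  have h1 : (0:ℝ) < 1 + ‖u‖ := by positivity
  have hmle : m * (1 + ‖u‖) ≤ t + ‖u‖ := by
    have h2 : m ≤ t := min_le_left _ _
    have h3 : m * ‖u‖ ≤ 1 * ‖u‖ :=
      mul_le_mul_of_nonneg_right (min_le_right _ _) (norm_nonneg u)
    nlinarith [norm_nonneg u]
  have h4 : (t + ‖u‖) ^ (-((n : ℝ) + β)) ≤ (m * (1 + ‖u‖)) ^ (-((n : ℝ) + β)) :=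
    rpow_le_rpow_of_nonpos (by positivity) hmle (by push_cast; linarith)
  have h2 : ‖u‖ ^ γ ≤ (1 + ‖u‖) ^ γ := rpow_le_rpow (norm_nonneg u) (by linarith) hγ
  rw [Real.norm_eq_abs, abs_of_nonneg (by positivity)]
  calc ‖u‖ ^ γ * (t + ‖u‖) ^ (-((n : ℝ) + β))
      ≤ (1 + ‖u‖) ^ γ * ((m * (1 + ‖u‖)) ^ (-((n : ℝ) + β))) := by
        apply mul_le_mul h2 h4 (rpow_nonneg (by positivity) _) (rpow_nonneg h1.le _)
    _ = m ^ (-((n : ℝ) + β)) * (1 + ‖u‖) ^ (-((n : ℝ) + β - γ)) := by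
        rw [mul_rpow hm0.le h1.le, show -((n:ℝ) + β - γ) = γ + -((n:ℝ)+β) by ring,
          Real.rpow_add h1]; ring

private lemma aux_scale (n : ℕ) {γ β t : ℝ} (hγ : 0 ≤ γ) (ht : 0 < t) :
    ∫ z : EuclideanSpace ℝ (Fin n), ‖z‖ ^ γ * (t + ‖z‖) ^ (-((n : ℝ) + β)) =
      t ^ (γ - β) * ∫ u : EuclideanSpace ℝ (Fin n), ‖u‖ ^ γ * (1 + ‖u‖) ^ (-((n : ℝ) + β)) := by
  have key := MeasureTheory.Measure.integral_comp_smul (volume : Measure (EuclideanSpace ℝ (Fin n)))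
    (fun z => ‖z‖ ^ γ * (t + ‖z‖) ^ (-((n : ℝ) + β))) t
  have hfr : finrank ℝ (EuclideanSpace ℝ (Fin n)) = n := finrank_euclideanSpace_fin
  have hfun : ∀ u : EuclideanSpace ℝ (Fin n),
      ‖t • u‖ ^ γ * (t + ‖t • u‖) ^ (-((n : ℝ) + β)) =
      t ^ (γ - ((n : ℝ) + β)) * (‖u‖ ^ γ * (1 + ‖u‖) ^ (-((n : ℝ) + β))) := by
    intro u
    have h1 : ‖t • u‖ = t * ‖u‖ := by
      rw [norm_smul, Real.norm_eq_abs, abs_of_pos ht]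
    have h2 : (0:ℝ) < 1 + ‖u‖ := by positivity
    rw [h1, mul_rpow ht.le (norm_nonneg u), show t + t * ‖u‖ = t * (1 + ‖u‖) by ring,
      mul_rpow ht.le h2.le, Real.rpow_sub ht, Real.rpow_neg ht.le, div_eq_mul_inv]
    ring
  simp only [hfun] at key
  rw [integral_const_mul, hfr, abs_of_nonneg (by positivity)] at key
  have htn : (t : ℝ) ^ (n : ℕ) = t ^ (n : ℝ) := (Real.rpow_natCast t n).symm
  have key2 : ∫ z : EuclideanSpace ℝ (Fin n), ‖z‖ ^ γ * (t + ‖z‖) ^ (-((n : ℝ) + β)) =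
      t ^ (n : ℕ) * (t ^ (γ - ((n : ℝ) + β)) *
        ∫ u : EuclideanSpace ℝ (Fin n), ‖u‖ ^ γ * (1 + ‖u‖) ^ (-((n : ℝ) + β))) := by
    rw [key, smul_eq_mul, ← mul_assoc, mul_inv_cancel₀ (by positivity), one_mul]
  rw [key2, htn, ← mul_assoc, ← Real.rpow_add ht]
  ring_nf


end AuxStmt13

theorem stmt_13 (n : ℕ) (hn : 1 ≤ n)
    (ρ : EuclideanSpace ℝ (Fin n) → ℝ) (hρ : ∀ x, 0 < ρ x)
    (α β δ' : ℝ) (hα0 : 0 < α) (hα1 : α < 1) (hβ : α < β) (hδ'1 : α < δ') (hδ'2 : δ' < β)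
    (K : ℝ → EuclideanSpace ℝ (Fin n) → EuclideanSpace ℝ (Fin n) → ℝ)
    (hKmeas : Measurable fun p : ℝ × EuclideanSpace ℝ (Fin n) × EuclideanSpace ℝ (Fin n) =>
      K p.1 p.2.1 p.2.2)
    (C₀ : ℝ) (hC₀ : 0 < C₀)
    (hKsize : ∀ (t : ℝ) (x z : EuclideanSpace ℝ (Fin n)), 0 < t →
      |K t x z| ≤ C₀ * t ^ β * (t + dist x z) ^ (-((n : ℝ) + β)))
    (hKint : ∀ (t : ℝ) (x : EuclideanSpace ℝ (Fin n)), 0 < t →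
      |∫ z, K t x z| ≤ C₀ * (t / ρ x) ^ δ')
    (f : EuclideanSpace ℝ (Fin n) → ℝ) (A : ℝ) (hA : 0 < A)
    (hfHolder : ∀ x z, |f x - f z| ≤ A * dist x z ^ α)
    (hfgrowth : ∀ x, |f x| ≤ A * ρ x ^ α) :
    ∃ C > (0 : ℝ), ∀ (x : EuclideanSpace ℝ (Fin n)) (t : ℝ), 0 < t →
      |∫ z, K t x z * f z| ≤ C * A * t ^ α := by
  have hβ0 : 0 < β := hα0.trans hβ
  set J1 : ℝ := ∫ u : EuclideanSpace ℝ (Fin n), ‖u‖ ^ (0:ℝ) * (1 + ‖u‖) ^ (-((n:ℝ)+β)) with hJ1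
  set J2 : ℝ := ∫ u : EuclideanSpace ℝ (Fin n), ‖u‖ ^ α * (1 + ‖u‖) ^ (-((n:ℝ)+β)) with hJ2
  have hJ1n : 0 ≤ J1 := integral_nonneg fun u => by positivity
  have hJ2n : 0 ≤ J2 := integral_nonneg fun u => by positivity
  -- continuity of f
  have hcont : Continuous f := by
    rw [continuous_iff_continuousAt]
    intro x₀
    rw [ContinuousAt, tendsto_iff_dist_tendsto_zero]
    have h1 : Filter.Tendsto (fun y => dist x₀ y) (nhds x₀) (nhds 0) := by
      have hc : Continuous fun y : EuclideanSpace ℝ (Fin n) => dist x₀ y :=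
        continuous_const.dist continuous_id
      simpa using hc.tendsto x₀
    have h2 : ContinuousAt (fun s : ℝ => A * s ^ α) 0 :=
      continuousAt_const.mul (Real.continuousAt_rpow_const 0 α (Or.inr hα0.le))
    have hb : Filter.Tendsto (fun y => A * dist x₀ y ^ α) (nhds x₀) (nhds 0) := by
      have := h2.tendsto.comp h1
      simpa [Function.comp_def, Real.zero_rpow hα0.ne'] using this
    refine squeeze_zero (fun y => dist_nonneg) (fun y => ?_) hb
    rw [Real.dist_eq]
    calc |f y - f x₀| = |f x₀ - f y| := abs_sub_comm _ _
      _ ≤ A * dist x₀ y ^ α := hfHolder x₀ y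
  have hfm : Measurable f := hcont.measurable
  refine ⟨C₀ * (J2 + J1 + 1), mul_pos hC₀ (by linarith), fun x t ht => ?_⟩
  have hKm : Measurable fun z : EuclideanSpace ℝ (Fin n) => K t x z :=
    hKmeas.comp (measurable_const.prodMk (measurable_const.prodMk measurable_id))
  -- weight functions
  have hw0 : Integrable (fun z : EuclideanSpace ℝ (Fin n) =>
      ‖z‖ ^ (0:ℝ) * (t + ‖z‖) ^ (-((n:ℝ)+β))) := aux_integrable_t n le_rfl hβ0 ht
  have hwα : Integrable (fun z : EuclideanSpace ℝ (Fin n) =>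
      ‖z‖ ^ α * (t + ‖z‖) ^ (-((n:ℝ)+β))) := aux_integrable_t n hα0.le hβ ht
  have hw0' : Integrable (fun z : EuclideanSpace ℝ (Fin n) =>
      ‖x - z‖ ^ (0:ℝ) * (t + ‖x - z‖) ^ (-((n:ℝ)+β))) := hw0.comp_sub_left x
  have hwα' : Integrable (fun z : EuclideanSpace ℝ (Fin n) =>
      ‖x - z‖ ^ α * (t + ‖x - z‖) ^ (-((n:ℝ)+β))) := hwα.comp_sub_left x
  have hdist : ∀ z : EuclideanSpace ℝ (Fin n), dist x z = ‖x - z‖ := fun z => dist_eq_norm x z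
  -- integrability of K t x ·
  have hKi : Integrable (fun z : EuclideanSpace ℝ (Fin n) => K t x z) := by
    refine (hw0'.const_mul (C₀ * t ^ β)).mono' hKm.aestronglyMeasurable (ae_of_all _ fun z => ?_)
    rw [Real.norm_eq_abs]
    calc |K t x z| ≤ C₀ * t ^ β * (t + dist x z) ^ (-((n:ℝ)+β)) := hKsize t x z ht
      _ = C₀ * t ^ β * (‖x - z‖ ^ (0:ℝ) * (t + ‖x - z‖) ^ (-((n:ℝ)+β))) := by
          rw [hdist z, Real.rpow_zero, one_mul]
  -- integrability of K t x · * (f · - f x)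
  have hK2i : Integrable (fun z : EuclideanSpace ℝ (Fin n) => K t x z * (f z - f x)) := by
    refine (hwα'.const_mul (C₀ * t ^ β * A)).mono'
      ((hKm.mul (hfm.sub measurable_const)).aestronglyMeasurable) (ae_of_all _ fun z => ?_)
    rw [Real.norm_eq_abs, abs_mul]
    have h1 : |K t x z| ≤ C₀ * t ^ β * (t + ‖x - z‖) ^ (-((n:ℝ)+β)) := by
      rw [← hdist z]; exact hKsize t x z ht
    have h2 : |f z - f x| ≤ A * ‖x - z‖ ^ α := by
      calc |f z - f x| ≤ A * dist z x ^ α := hfHolder z x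
        _ = A * ‖x - z‖ ^ α := by rw [dist_comm, hdist z]
    calc |K t x z| * |f z - f x| ≤
        (C₀ * t ^ β * (t + ‖x - z‖) ^ (-((n:ℝ)+β))) * (A * ‖x - z‖ ^ α) :=
          mul_le_mul h1 h2 (abs_nonneg _) (by positivity)
      _ = C₀ * t ^ β * A * (‖x - z‖ ^ α * (t + ‖x - z‖) ^ (-((n:ℝ)+β))) := by ring
  -- split
  have hsplit : ∫ z, K t x z * f z =
      (∫ z, K t x z * (f z - f x)) + (∫ z, K t x z) * f x := by
    rw [← MeasureTheory.integral_mul_const, ← integral_add hK2i (hKi.mul_const (f x))]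
    congr 1; funext z; ring
  -- Term 1
  have hT1 : |∫ z, K t x z * (f z - f x)| ≤ C₀ * J2 * A * t ^ α := by
    have htβ : t ^ β * t ^ (α - β) = t ^ α := by
      rw [← Real.rpow_add ht]; ring_nf
    calc |∫ z, K t x z * (f z - f x)| ≤ ∫ z, |K t x z * (f z - f x)| := by
          simpa only [Real.norm_eq_abs] using
            norm_integral_le_integral_norm (μ := volume) (fun z => K t x z * (f z - f x))
      _ ≤ ∫ z, C₀ * t ^ β * A * (‖x - z‖ ^ α * (t + ‖x - z‖) ^ (-((n:ℝ)+β))) := by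
          refine integral_mono hK2i.abs (hwα'.const_mul _) fun z => ?_
          rw [abs_mul]
          have h1 : |K t x z| ≤ C₀ * t ^ β * (t + ‖x - z‖) ^ (-((n:ℝ)+β)) := by
            rw [← hdist z]; exact hKsize t x z ht
          have h2 : |f z - f x| ≤ A * ‖x - z‖ ^ α := by
            calc |f z - f x| ≤ A * dist z x ^ α := hfHolder z x
              _ = A * ‖x - z‖ ^ α := by rw [dist_comm, hdist z]
          calc |K t x z| * |f z - f x| ≤
              (C₀ * t ^ β * (t + ‖x - z‖) ^ (-((n:ℝ)+β))) * (A * ‖x - z‖ ^ α) :=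
                mul_le_mul h1 h2 (abs_nonneg _) (by positivity)
            _ = C₀ * t ^ β * A * (‖x - z‖ ^ α * (t + ‖x - z‖) ^ (-((n:ℝ)+β))) := by ring
      _ = C₀ * t ^ β * A * ∫ z, ‖x - z‖ ^ α * (t + ‖x - z‖) ^ (-((n:ℝ)+β)) :=
          MeasureTheory.integral_const_mul _ _
      _ = C₀ * t ^ β * A * (t ^ (α - β) * J2) := by
          rw [MeasureTheory.integral_sub_left_eq_self
            (fun z => ‖z‖ ^ α * (t + ‖z‖) ^ (-((n:ℝ)+β))) volume x, aux_scale n hα0.le ht, hJ2]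
      _ = C₀ * J2 * A * t ^ α := by rw [← htβ]; ring
  -- Term 2
  have hT2 : |(∫ z, K t x z) * f x| ≤ C₀ * (J1 + 1) * A * t ^ α := by
    rw [abs_mul]
    rcases le_or_gt t (ρ x) with hcase | hcase
    · have hr : 0 < ρ x := hρ x
      have hσ0 : 0 < t / ρ x := div_pos ht hr
      have hσ1 : t / ρ x ≤ 1 := (div_le_one hr).2 hcase
      have h1 : |∫ z, K t x z| ≤ C₀ * (t / ρ x) ^ δ' := hKint t x ht
      have h2 : |f x| ≤ A * ρ x ^ α := hfgrowth x
      have h3 : (t / ρ x) ^ δ' ≤ (t / ρ x) ^ α :=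
        Real.rpow_le_rpow_of_exponent_ge hσ0 hσ1 (le_of_lt hδ'1)
      have h4 : (t / ρ x) ^ α * ρ x ^ α = t ^ α := by
        rw [← Real.mul_rpow hσ0.le hr.le, div_mul_cancel₀ _ hr.ne']
      calc |∫ z, K t x z| * |f x| ≤ (C₀ * (t / ρ x) ^ δ') * (A * ρ x ^ α) :=
            mul_le_mul h1 h2 (abs_nonneg _) (by positivity)
        _ ≤ (C₀ * (t / ρ x) ^ α) * (A * ρ x ^ α) := by
            have := mul_le_mul_of_nonneg_left h3 hC₀.le
            exact mul_le_mul_of_nonneg_right this (by positivity)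
        _ = C₀ * A * t ^ α := by rw [← h4]; ring
        _ ≤ C₀ * (J1 + 1) * A * t ^ α := by
            nlinarith [mul_nonneg (mul_nonneg (mul_nonneg hC₀.le hJ1n) hA.le)
              (Real.rpow_nonneg ht.le α)]
    · have hr : 0 < ρ x := hρ x
      have htβ : t ^ β * t ^ ((0:ℝ) - β) = 1 := by
        rw [← Real.rpow_add ht]; norm_num
      have h1 : |∫ z, K t x z| ≤ C₀ * J1 := by
        calc |∫ z, K t x z| ≤ ∫ z, |K t x z| := by
              simpa only [Real.norm_eq_abs] using
                norm_integral_le_integral_norm (μ := volume) (fun z => K t x z)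
          _ ≤ ∫ z, C₀ * t ^ β * (‖x - z‖ ^ (0:ℝ) * (t + ‖x - z‖) ^ (-((n:ℝ)+β))) := by
              refine integral_mono hKi.abs (hw0'.const_mul _) fun z => ?_
              calc |K t x z| ≤ C₀ * t ^ β * (t + dist x z) ^ (-((n:ℝ)+β)) := hKsize t x z ht
                _ = C₀ * t ^ β * (‖x - z‖ ^ (0:ℝ) * (t + ‖x - z‖) ^ (-((n:ℝ)+β))) := by
                    rw [hdist z, Real.rpow_zero, one_mul]
          _ = C₀ * t ^ β * ∫ z, ‖x - z‖ ^ (0:ℝ) * (t + ‖x - z‖) ^ (-((n:ℝ)+β)) :=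
              MeasureTheory.integral_const_mul _ _
          _ = C₀ * t ^ β * (t ^ ((0:ℝ) - β) * J1) := by
              rw [MeasureTheory.integral_sub_left_eq_self
                (fun z => ‖z‖ ^ (0:ℝ) * (t + ‖z‖) ^ (-((n:ℝ)+β))) volume x,
                aux_scale n le_rfl ht, hJ1]
          _ = C₀ * J1 := by linear_combination C₀ * J1 * htβ
      have h2 : |f x| ≤ A * t ^ α := by
        calc |f x| ≤ A * ρ x ^ α := hfgrowth x
          _ ≤ A * t ^ α :=
            mul_le_mul_of_nonneg_left (Real.rpow_le_rpow hr.le hcase.le hα0.le) hA.le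
      calc |∫ z, K t x z| * |f x| ≤ (C₀ * J1) * (A * t ^ α) :=
            mul_le_mul h1 h2 (abs_nonneg _) (by positivity)
        _ ≤ C₀ * (J1 + 1) * A * t ^ α := by
            nlinarith [mul_nonneg (mul_nonneg hC₀.le hA.le) (Real.rpow_nonneg ht.le α)]
  calc |∫ z, K t x z * f z| ≤
      |∫ z, K t x z * (f z - f x)| + |(∫ z, K t x z) * f x| := by
        rw [hsplit]; exact abs_add_le _ _
    _ ≤ C₀ * J2 * A * t ^ α + C₀ * (J1 + 1) * A * t ^ α := add_le_add hT1 hT2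
    _ = C₀ * (J2 + J1 + 1) * A * t ^ α := by ring
end
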